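/- If there exists a B(n+1)-configuration that freely contains exactly two K_n-graphs, then there exists a B(n+1)-configuration that freely contains no K_n-graph at all. (Obtained by a 'line switch': replacing two lines {q,a_1,b_1}, {q,a_2,b_2} through a common intersection point q of sides of the two graphs by {q,a_1,b_2}, {q,b_1,a_2}.) -/
import Mathlib


open Finset

/-- A partial Steiner triple system: a finite incidence structure given by its
set of lines (3-element subsets of the point set) such that two distinct
points lie on at most one common line. -/
structure PSTS (S : Type) where
  lines : Finset (Finset S)
  card3 : ∀ L ∈ lines, L.card = 3
  unique : ∀ L₁ ∈ lines, ∀ L₂ ∈ lines, ∀ a b : S, a ≠ b →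
    a ∈ L₁ → b ∈ L₁ → a ∈ L₂ → b ∈ L₂ → L₁ = L₂

/-- The rank of a point: the number of lines through it. -/
def pointRank {S : Type} [DecidableEq S] (M : PSTS S) (p : S) : ℕ :=
  (M.lines.filter (fun L => p ∈ L)).card

/-- A binomial B(m)-configuration: C(m,2) points, each of rank m-2, and C(m,3) lines. -/
def IsBinomial {S : Type} [Fintype S] [DecidableEq S] (M : PSTS S) (m : ℕ) : Prop :=
  Fintype.card S = Nat.choose m 2 ∧ M.lines.card = Nat.choose m 3 ∧
    ∀ p : S, pointRank M p = m - 2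

/-- `L` is a side of the complete graph on `X`: a line of `M` meeting `X` in
exactly two points (the extension of an edge of `K_X`). -/
def IsSide {S : Type} [DecidableEq S] (M : PSTS S) (X L : Finset S) : Prop :=
  L ∈ M.lines ∧ (L ∩ X).card = 2

instance {S : Type} [DecidableEq S] (M : PSTS S) (X L : Finset S) :
    Decidable (IsSide M X L) := by
  unfold IsSide; infer_instance

/-- The complete graph on the vertex set `X` is freely contained in `M`:
every edge of `K_X` extends to a (necessarily unique) line of `M` which meets
`X` in exactly two points (hence distinct edges extend to distinct lines), and
two distinct sides never meet outside `X`. -/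
def FreelyContains {S : Type} [DecidableEq S] (M : PSTS S) (X : Finset S) : Prop :=
  (∀ a ∈ X, ∀ b ∈ X, a ≠ b → ∃ L ∈ M.lines, a ∈ L ∧ b ∈ L ∧ (L ∩ X).card = 2) ∧
  (∀ L₁ L₂ : Finset S, IsSide M X L₁ → IsSide M X L₂ → L₁ ≠ L₂ →
    ∀ p, p ∈ L₁ → p ∈ L₂ → p ∈ X)

/-- `(Z,G)` is a B(m)-configuration regularly contained in `M` (a subspace):
the lines of `G` are lines of `M` lying in `Z`, every line of `M` meeting `Z`
in at least two points belongs to `G`, and `(Z,G)` has the binomial B(m) parameters. -/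
def RegularBinomialSub {S : Type} [DecidableEq S] (M : PSTS S)
    (Z : Finset S) (G : Finset (Finset S)) (m : ℕ) : Prop :=
  G ⊆ M.lines ∧ (∀ L ∈ G, L ⊆ Z) ∧
  (∀ L ∈ M.lines, 2 ≤ (L ∩ Z).card → L ∈ G) ∧
  Z.card = Nat.choose m 2 ∧ G.card = Nat.choose m 3 ∧
  ∀ p ∈ Z, (G.filter (fun L => p ∈ L)).card = m - 2

/-- The lines of the combinatorial Grassmannian G(Y,2): triples of 2-subsets
of `Y` contained in a common 3-subset. -/
def GrasLines (Y : Type) [Fintype Y] [DecidableEq Y] :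
    Finset (Finset {e : Finset Y // e.card = 2}) :=
  (Finset.univ.filter (fun f : Finset Y => f.card = 3)).image
    (fun f => Finset.univ.filter (fun e : {e : Finset Y // e.card = 2} => e.val ⊆ f))

/-- `M` freely contains exactly `m` complete `K_j`-graphs. -/
def ExactlyKGraphs {S : Type} [DecidableEq S] (M : PSTS S) (j m : ℕ) : Prop :=
  ∃ f : Fin m → Finset S, Function.Injective f ∧
    (∀ i, (f i).card = j ∧ FreelyContains M (f i)) ∧
    (∀ X : Finset S, X.card = j → FreelyContains M X → ∃ i, X = f i)

set_option linter.unusedSectionVars false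
set_option linter.unusedVariables false
set_option maxHeartbeats 8000000

section Helpers

variable {S : Type} [DecidableEq S]

private lemma free1 {M : PSTS S} {X : Finset S} (h : FreelyContains M X) :
    ∀ a ∈ X, ∀ b ∈ X, a ≠ b → ∃ L ∈ M.lines, a ∈ L ∧ b ∈ L ∧ (L ∩ X).card = 2 :=
  h.1

private lemma free2 {M : PSTS S} {X : Finset S} (h : FreelyContains M X) :
    ∀ L₁ L₂ : Finset S, L₁ ∈ M.lines → (L₁ ∩ X).card = 2 →
      L₂ ∈ M.lines → (L₂ ∩ X).card = 2 → L₁ ≠ L₂ →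
      ∀ p, p ∈ L₁ → p ∈ L₂ → p ∈ X :=
  fun L₁ L₂ h1 h2 h3 h4 h5 p hp1 hp2 => h.2 L₁ L₂ ⟨h1, h2⟩ ⟨h3, h4⟩ h5 p hp1 hp2

private lemma mkFree {M : PSTS S} {X : Finset S}
    (h1 : ∀ a ∈ X, ∀ b ∈ X, a ≠ b → ∃ L ∈ M.lines, a ∈ L ∧ b ∈ L ∧ (L ∩ X).card = 2)
    (h2 : ∀ L₁ L₂ : Finset S, L₁ ∈ M.lines → (L₁ ∩ X).card = 2 →
      L₂ ∈ M.lines → (L₂ ∩ X).card = 2 → L₁ ≠ L₂ →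
      ∀ p, p ∈ L₁ → p ∈ L₂ → p ∈ X) : FreelyContains M X :=
  ⟨h1, fun L₁ L₂ hs1 hs2 hne p hp1 hp2 => h2 L₁ L₂ hs1.1 hs1.2 hs2.1 hs2.2 hne p hp1 hp2⟩

private lemma uniq_pair (M : PSTS S) {L K : Finset S} {a b : S}
    (hL : L ∈ M.lines) (hK : K ∈ M.lines) (hab : a ≠ b)
    (h1 : a ∈ L) (h2 : b ∈ L) (h3 : a ∈ K) (h4 : b ∈ K) : L = K :=
  M.unique L hL K hK a b hab h1 h2 h3 h4

private lemma notMem_triple {x a b c : S} (h : x ∈ ({a, b, c} : Finset S))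
    (h1 : x ≠ a) (h2 : x ≠ b) (h3 : x ≠ c) : False := by
  simp only [Finset.mem_insert, Finset.mem_singleton] at h
  rcases h with h | h | h
  exacts [h1 h, h2 h, h3 h]

private lemma mem_triple {x a b c : S} :
    x ∈ ({a, b, c} : Finset S) ↔ x = a ∨ x = b ∨ x = c := by
  simp

private lemma card_triple {a b c : S} (h1 : a ≠ b) (h2 : a ≠ c) (h3 : b ≠ c) :
    ({a, b, c} : Finset S).card = 3 := by
  rw [Finset.card_insert_of_notMem (by simp [h1, h2]), Finset.card_pair h3]

private lemma eq_pair_of_card_two {s : Finset S} {a b : S} (h : s.card = 2)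
    (ha : a ∈ s) (hb : b ∈ s) (hab : a ≠ b) : s = {a, b} := by
  symm
  apply Finset.eq_of_subset_of_card_le
  · intro x hx
    rcases Finset.mem_insert.mp hx with rfl | hx
    · exact ha
    · rw [Finset.mem_singleton] at hx; subst hx; exact hb
  · rw [h, Finset.card_pair hab]

private lemma eq_triple_of_card_three {s : Finset S} {a b c : S} (h : s.card = 3)
    (ha : a ∈ s) (hb : b ∈ s) (hc : c ∈ s)
    (hab : a ≠ b) (hac : a ≠ c) (hbc : b ≠ c) : s = {a, b, c} := by
  symm
  apply Finset.eq_of_subset_of_card_le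
  · intro x hx
    rcases mem_triple.mp hx with rfl | rfl | rfl
    exacts [ha, hb, hc]
  · rw [h, card_triple hab hac hbc]

private lemma third_point {s : Finset S} {a b : S} (h : s.card = 3)
    (ha : a ∈ s) (hb : b ∈ s) (hab : a ≠ b) :
    ∃ c, c ≠ a ∧ c ≠ b ∧ s = {a, b, c} := by
  have h2 : ({a, b} : Finset S) ⊆ s := by
    intro x hx
    rcases Finset.mem_insert.mp hx with rfl | hx
    · exact ha
    · rw [Finset.mem_singleton] at hx; subst hx; exact hb
  have hne : (s \ {a, b}).Nonempty := by
    rw [← Finset.card_pos, Finset.card_sdiff_of_subset h2, Finset.card_pair hab, h]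
    norm_num
  obtain ⟨c, hc⟩ := hne
  rw [Finset.mem_sdiff] at hc
  have hca : c ≠ a := fun hh => hc.2 (by simp [hh])
  have hcb : c ≠ b := fun hh => hc.2 (by simp [hh])
  exact ⟨c, hca, hcb, eq_triple_of_card_three h ha hb hc.1 hab hca.symm hcb.symm⟩

private lemma double_count (A : Finset S) (B : Finset (Finset S)) :
    ∑ z ∈ A, (B.filter (fun L => z ∈ L)).card
      = ∑ L ∈ B, (A.filter (fun z => z ∈ L)).card := by
  simp only [Finset.card_filter]
  exact Finset.sum_comm

private lemma free_line_inter {n : ℕ} (M : PSTS S)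
    (hrank : ∀ x : S, pointRank M x = n - 1)
    {X : Finset S} (hX : FreelyContains M X) (hXc : X.card = n)
    {a : S} (ha : a ∈ X) {L : Finset S} (hL : L ∈ M.lines) (haL : a ∈ L) :
    (L ∩ X).card = 2 := by
  classical
  have hg : ∀ b : S, ∃ K : Finset S, b ∈ X.erase a →
      (K ∈ M.lines ∧ a ∈ K ∧ b ∈ K ∧ (K ∩ X).card = 2) := by
    intro b
    by_cases hb : b ∈ X.erase a
    · obtain ⟨hba, hbX⟩ := Finset.mem_erase.mp hb
      obtain ⟨K, hK, haK, hbK, h2⟩ := free1 hX a ha b hbX (Ne.symm hba)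
      exact ⟨K, fun _ => ⟨hK, haK, hbK, h2⟩⟩
    · exact ⟨∅, fun h => absurd h hb⟩
  choose g hg using hg
  have hinj : Set.InjOn g (X.erase a) := by
    intro b hb b' hb' hbb
    obtain ⟨hK, haK, hbK, h2⟩ := hg b hb
    obtain ⟨hK', haK', hbK', h2'⟩ := hg b' hb'
    have hba := (Finset.mem_erase.mp hb).1
    have hba' := (Finset.mem_erase.mp hb').1
    have hbX := (Finset.mem_erase.mp hb).2
    have hbX' := (Finset.mem_erase.mp hb').2
    have e1 : g b ∩ X = {a, b} :=
      eq_pair_of_card_two h2 (Finset.mem_inter.mpr ⟨haK, ha⟩)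
        (Finset.mem_inter.mpr ⟨hbK, hbX⟩) (Ne.symm hba)
    have e2 : g b' ∩ X = {a, b'} :=
      eq_pair_of_card_two h2' (Finset.mem_inter.mpr ⟨haK', ha⟩)
        (Finset.mem_inter.mpr ⟨hbK', hbX'⟩) (Ne.symm hba')
    have : b ∈ ({a, b'} : Finset S) := by
      rw [← e2, ← hbb, e1]; simp
    rcases Finset.mem_insert.mp this with h | h
    · exact absurd h hba
    · rwa [Finset.mem_singleton] at h
  have himage : (X.erase a).image g ⊆ M.lines.filter (fun K => a ∈ K) := by
    intro K hK
    obtain ⟨b, hb, rfl⟩ := Finset.mem_image.mp hK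
    obtain ⟨h1, h2, _, _⟩ := hg b hb
    exact Finset.mem_filter.mpr ⟨h1, h2⟩
  have hcard1 : ((X.erase a).image g).card = n - 1 := by
    rw [Finset.card_image_of_injOn hinj, Finset.card_erase_of_mem ha, hXc]
  have hfcard : (M.lines.filter (fun K => a ∈ K)).card = n - 1 := hrank a
  have heq : (X.erase a).image g = M.lines.filter (fun K => a ∈ K) :=
    Finset.eq_of_subset_of_card_le himage (by rw [hcard1, hfcard])
  have hLmem : L ∈ (X.erase a).image g := by
    rw [heq]; exact Finset.mem_filter.mpr ⟨hL, haL⟩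
  obtain ⟨b, hb, hbL⟩ := Finset.mem_image.mp hLmem
  obtain ⟨_, _, _, h2⟩ := hg b hb
  rw [← hbL]; exact h2

private lemma side_unique {M : PSTS S} {X : Finset S} (hX : FreelyContains M X)
    {z : S} (hz : z ∉ X) {L K : Finset S} (hL : L ∈ M.lines) (hK : K ∈ M.lines)
    (hzL : z ∈ L) (hzK : z ∈ K) (h2L : (L ∩ X).card = 2) (h2K : (K ∩ X).card = 2) :
    L = K := by
  by_contra hne
  exact hz (free2 hX L K hL h2L hK h2K hne z hzL hzK)

end Helpers

section Counting

variable {S : Type} [DecidableEq S] [Fintype S]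

private lemma side_exists {n : ℕ} (M : PSTS S)
    (hcardS : Fintype.card S = (n + 1).choose 2)
    {X : Finset S} (hX : FreelyContains M X) (hXc : X.card = n)
    {z : S} (hz : z ∉ X) : ∃ L ∈ M.lines, z ∈ L ∧ (L ∩ X).card = 2 := by
  classical
  by_contra hno
  push_neg at hno
  set Sides := M.lines.filter (fun L => (L ∩ X).card = 2) with hS
  have hchoice : ∀ e : Finset S, ∃ L : Finset S, e ∈ X.powersetCard 2 →
      (L ∈ Sides ∧ e = L ∩ X) := by
    intro e
    by_cases he : e ∈ X.powersetCard 2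
    · obtain ⟨heX, hec⟩ := Finset.mem_powersetCard.mp he
      obtain ⟨a, b, hab, rfl⟩ := Finset.card_eq_two.mp hec
      have haX : a ∈ X := heX (by simp)
      have hbX : b ∈ X := heX (by simp)
      obtain ⟨L, hL, haL, hbL, h2⟩ := free1 hX a haX b hbX hab
      refine ⟨L, fun _ => ⟨Finset.mem_filter.mpr ⟨hL, h2⟩, ?_⟩⟩
      exact (eq_pair_of_card_two h2 (Finset.mem_inter.mpr ⟨haL, haX⟩)
        (Finset.mem_inter.mpr ⟨hbL, hbX⟩) hab).symm
    · exact ⟨∅, fun h => absurd h he⟩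
  choose F hF using hchoice
  have hinj : Set.InjOn F (X.powersetCard 2) := by
    intro e he e' he' hee
    rw [(hF e he).2, (hF e' he').2, hee]
  have hle1 : n.choose 2 ≤ Sides.card := by
    have := Finset.card_le_card_of_injOn F (fun e he => (hF e he).1) hinj
    rwa [Finset.card_powersetCard, hXc] at this
  have hsig : ∀ y ∈ Xᶜ, (Sides.filter (fun L => y ∈ L)).card ≤ 1 := by
    intro y hy
    by_contra hgt
    push_neg at hgt
    obtain ⟨L, hL, K, hK, hLK⟩ := Finset.one_lt_card.mp hgt
    obtain ⟨hL1, hL2⟩ := Finset.mem_filter.mp hL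
    obtain ⟨hK1, hK2⟩ := Finset.mem_filter.mp hK
    obtain ⟨hL3, hL4⟩ := Finset.mem_filter.mp hL1
    obtain ⟨hK3, hK4⟩ := Finset.mem_filter.mp hK1
    exact (Finset.mem_compl.mp hy) (free2 hX L K hL3 hL4 hK3 hK4 hLK y hL2 hK2)
  have hsz : (Sides.filter (fun L => z ∈ L)).card = 0 := by
    rw [Finset.card_eq_zero, Finset.eq_empty_iff_forall_notMem]
    intro L hL
    obtain ⟨hL1, hL2⟩ := Finset.mem_filter.mp hL
    obtain ⟨hL3, hL4⟩ := Finset.mem_filter.mp hL1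
    exact hno L hL3 hL2 hL4
  have hterm : ∀ L ∈ Sides, (Xᶜ.filter (fun y => y ∈ L)).card = 1 := by
    intro L hL
    obtain ⟨hLm, hL2⟩ := Finset.mem_filter.mp hL
    have h3 := M.card3 L hLm
    have hre : Xᶜ.filter (fun y => y ∈ L) = L \ X := by
      ext y
      simp only [Finset.mem_filter, Finset.mem_compl, Finset.mem_sdiff]
      tauto
    rw [hre]
    have := Finset.card_sdiff_add_card_inter L X
    omega
  have hsum : ∑ y ∈ Xᶜ, (Sides.filter (fun L => y ∈ L)).card = Sides.card := by
    rw [double_count]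
    rw [Finset.sum_congr rfl hterm, Finset.sum_const, smul_eq_mul, mul_one]
  have hcompl : (Xᶜ : Finset S).card = n.choose 2 := by
    rw [Finset.card_compl, hXc, hcardS]
    have h2 : (n + 1).choose 2 = n.choose 1 + n.choose 2 := Nat.choose_succ_succ' n 1
    rw [Nat.choose_one_right] at h2
    omega
  have hzc : z ∈ Xᶜ := Finset.mem_compl.mpr hz
  have hlt : Sides.card < n.choose 2 := by
    calc Sides.card = ∑ y ∈ Xᶜ, (Sides.filter (fun L => y ∈ L)).card := hsum.symm
    _ < ∑ _y ∈ Xᶜ, 1 := Finset.sum_lt_sum hsig ⟨z, hzc, by rw [hsz]; norm_num⟩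
    _ = n.choose 2 := by rw [Finset.sum_const, smul_eq_mul, mul_one, hcompl]
  omega

end Counting

section Geometry

variable {S : Type} [DecidableEq S] [Fintype S]

private lemma line_through_common {n : ℕ} (M : PSTS S)
    (hrank : ∀ x : S, pointRank M x = n - 1)
    {X1 X2 : Finset S} (h1 : FreelyContains M X1) (h2 : FreelyContains M X2)
    (hc1 : X1.card = n) (hc2 : X2.card = n)
    {p : S} (hp12 : X1 ∩ X2 = {p})
    {L : Finset S} (hL : L ∈ M.lines) (hpL : p ∈ L) :
    ∃ x y, x ∈ X1 ∧ x ≠ p ∧ y ∈ X2 ∧ y ≠ p ∧ L = {p, x, y} := by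
  have hpm : p ∈ X1 ∩ X2 := by rw [hp12]; simp
  have hp1 : p ∈ X1 := (Finset.mem_inter.mp hpm).1
  have hp2 : p ∈ X2 := (Finset.mem_inter.mp hpm).2
  have c1 : (L ∩ X1).card = 2 := free_line_inter M hrank h1 hc1 hp1 hL hpL
  have c2 : (L ∩ X2).card = 2 := free_line_inter M hrank h2 hc2 hp2 hL hpL
  obtain ⟨x, hx, hxp⟩ := Finset.exists_mem_ne (by omega) p (s := L ∩ X1)
  obtain ⟨y, hy, hyp⟩ := Finset.exists_mem_ne (by omega) p (s := L ∩ X2)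
  obtain ⟨hxL, hxX⟩ := Finset.mem_inter.mp hx
  obtain ⟨hyL, hyX⟩ := Finset.mem_inter.mp hy
  have hxy : x ≠ y := by
    intro hh
    apply hxp
    have : x ∈ X1 ∩ X2 := Finset.mem_inter.mpr ⟨hxX, hh ▸ hyX⟩
    rw [hp12] at this
    exact Finset.mem_singleton.mp this
  exact ⟨x, y, hxX, hxp, hyX, hyp,
    eq_triple_of_card_three (M.card3 L hL) hpL hxL hyL (Ne.symm hxp) (Ne.symm hyp) hxy⟩

private lemma cross_line {n : ℕ} (M : PSTS S)
    (hrank : ∀ x : S, pointRank M x = n - 1)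
    {X1 X2 : Finset S} (h1 : FreelyContains M X1) (h2 : FreelyContains M X2)
    (hc1 : X1.card = n) (hc2 : X2.card = n)
    {p : S} (hp12 : X1 ∩ X2 = {p})
    {u t : S} {L : Finset S} (hu : u ∈ X1) (ht : t ∈ X2) (htp : t ≠ p)
    (hL : L ∈ M.lines) (huL : u ∈ L) (htL : t ∈ L) : p ∈ L := by
  have htn1 : t ∉ X1 := by
    intro hh
    apply htp
    have : t ∈ X1 ∩ X2 := Finset.mem_inter.mpr ⟨hh, ht⟩
    rw [hp12] at this
    exact Finset.mem_singleton.mp this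
  have hut : u ≠ t := fun hh => htn1 (hh ▸ hu)
  have c1 : (L ∩ X1).card = 2 := free_line_inter M hrank h1 hc1 hu hL huL
  have c2 : (L ∩ X2).card = 2 := free_line_inter M hrank h2 hc2 ht hL htL
  obtain ⟨x, hx, hxu⟩ := Finset.exists_mem_ne (by omega) u (s := L ∩ X1)
  obtain ⟨hxL, hxX⟩ := Finset.mem_inter.mp hx
  have hxt : x ≠ t := fun hh => htn1 (hh ▸ hxX)
  have hLeq : L = {u, x, t} :=
    eq_triple_of_card_three (M.card3 L hL) huL hxL htL (Ne.symm hxu) hut hxt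
  obtain ⟨y, hy, hyt⟩ := Finset.exists_mem_ne (by omega) t (s := L ∩ X2)
  obtain ⟨hyL, hyX⟩ := Finset.mem_inter.mp hy
  have hy1 : y ∈ X1 := by
    have : y ∈ ({u, x, t} : Finset S) := hLeq ▸ hyL
    rcases mem_triple.mp this with rfl | rfl | rfl
    · exact hu
    · exact hxX
    · exact absurd rfl hyt
  have : y ∈ X1 ∩ X2 := Finset.mem_inter.mpr ⟨hy1, hyX⟩
  rw [hp12] at this
  rw [← Finset.mem_singleton.mp this]
  exact hyL

private lemma common_point {n : ℕ} (M : PSTS S)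
    (hrank : ∀ x : S, pointRank M x = n - 1)
    (hcardS : Fintype.card S = (n + 1).choose 2)
    {X1 X2 : Finset S} (h1 : FreelyContains M X1) (h2 : FreelyContains M X2)
    (hc1 : X1.card = n) (hc2 : X2.card = n) (hne : X1 ≠ X2) :
    ∃ p, X1 ∩ X2 = {p} := by
  have hdiff : ∀ A B : Finset S, A.card = n → B.card = n → A ≠ B →
      ∃ x, x ∈ B ∧ x ∉ A := by
    intro A B hA hB hAB
    have : ¬B ⊆ A := by
      intro hsub
      exact hAB (Finset.eq_of_subset_of_card_le hsub (by rw [hA, hB])).symm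
    obtain ⟨x, hx1, hx2⟩ := Finset.not_subset.mp this
    exact ⟨x, hx1, hx2⟩
  obtain ⟨x, hx2, hx1⟩ := hdiff X1 X2 hc1 hc2 hne
  obtain ⟨T, hT, hxT, hT2⟩ := side_exists M hcardS h1 hc1 hx1
  have hTX2 : (T ∩ X2).card = 2 := free_line_inter M hrank h2 hc2 hx2 hT hxT
  obtain ⟨y, hy, hyx⟩ := Finset.exists_mem_ne (by omega) x (s := T ∩ X2)
  obtain ⟨hyT, hyX2⟩ := Finset.mem_inter.mp hy
  obtain ⟨u, v, huv, hTX1⟩ := Finset.card_eq_two.mp hT2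
  have huT : u ∈ T := by
    have : u ∈ T ∩ X1 := by rw [hTX1]; simp
    exact (Finset.mem_inter.mp this).1
  have hvT : v ∈ T := by
    have : v ∈ T ∩ X1 := by rw [hTX1]; simp
    exact (Finset.mem_inter.mp this).1
  have huX1 : u ∈ X1 := by
    have : u ∈ T ∩ X1 := by rw [hTX1]; simp
    exact (Finset.mem_inter.mp this).2
  have hvX1 : v ∈ X1 := by
    have : v ∈ T ∩ X1 := by rw [hTX1]; simp
    exact (Finset.mem_inter.mp this).2
  have hxu : x ≠ u := fun hh => hx1 (hh ▸ huX1)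
  have hxv : x ≠ v := fun hh => hx1 (hh ▸ hvX1)
  have hTeq : T = {u, v, x} :=
    eq_triple_of_card_three (M.card3 T hT) huT hvT hxT huv (Ne.symm hxu) (Ne.symm hxv)
  have hyX1 : y ∈ X1 := by
    have : y ∈ ({u, v, x} : Finset S) := hTeq ▸ hyT
    rcases mem_triple.mp this with rfl | rfl | rfl
    · exact huX1
    · exact hvX1
    · exact absurd rfl hyx
  have hyi : y ∈ X1 ∩ X2 := Finset.mem_inter.mpr ⟨hyX1, hyX2⟩
  -- uniqueness
  have huniq : ∀ a ∈ X1 ∩ X2, ∀ b ∈ X1 ∩ X2, a = b := by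
    intro a ha b hb
    by_contra hab
    obtain ⟨ha1, ha2⟩ := Finset.mem_inter.mp ha
    obtain ⟨hb1, hb2⟩ := Finset.mem_inter.mp hb
    obtain ⟨x', hx'1, hx'2⟩ := hdiff X2 X1 hc2 hc1 hne.symm
    have hax : a ≠ x' := fun hh => hx'2 (hh ▸ ha2)
    have hbx : b ≠ x' := fun hh => hx'2 (hh ▸ hb2)
    obtain ⟨La, hLa, haLa, hxLa, hLa2⟩ := free1 h1 a ha1 x' hx'1 hax
    obtain ⟨Lb, hLb, hbLb, hxLb, hLb2⟩ := free1 h1 b hb1 x' hx'1 hbx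
    have hLaLb : La ≠ Lb := by
      intro hh
      have hbLa : b ∈ La := hh ▸ hbLb
      have hsub : ({a, b, x'} : Finset S) ⊆ La ∩ X1 := by
        intro w hw
        rcases mem_triple.mp hw with rfl | rfl | rfl
        · exact Finset.mem_inter.mpr ⟨haLa, ha1⟩
        · exact Finset.mem_inter.mpr ⟨hbLa, hb1⟩
        · exact Finset.mem_inter.mpr ⟨hxLa, hx'1⟩
      have := Finset.card_le_card hsub
      rw [hLa2, card_triple hab hax hbx] at this
      omega
    have hLa2' : (La ∩ X2).card = 2 := free_line_inter M hrank h2 hc2 ha2 hLa haLa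
    have hLb2' : (Lb ∩ X2).card = 2 := free_line_inter M hrank h2 hc2 hb2 hLb hbLb
    exact hx'2 (free2 h2 La Lb hLa hLa2' hLb hLb2' hLaLb x' hxLa hxLb)
  exact ⟨y, Finset.eq_singleton_iff_unique_mem.mpr ⟨hyi, fun b hb => huniq b hb y hyi⟩⟩

end Geometry

section Cases

variable {S : Type} [DecidableEq S] [Fintype S]

private lemma caseA {n : ℕ} (M Mp : PSTS S)
    (hrank : ∀ x : S, pointRank M x = n - 1)
    (hrank' : ∀ x : S, pointRank Mp x = n - 1)
    {X1 X2 : Finset S}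
    (hf1 : FreelyContains M X1) (hf2 : FreelyContains M X2)
    (hc1 : X1.card = n) (hc2 : X2.card = n) (hn : 4 ≤ n)
    {p q a1 b1 a2 b2 : S}
    (hp12 : X1 ∩ X2 = {p})
    (hq1 : q ∉ X1) (hq2 : q ∉ X2)
    (ha1 : a1 ∈ X1) (hb1 : b1 ∈ X1) (ha2 : a2 ∈ X2) (hb2 : b2 ∈ X2)
    (ha1p : a1 ≠ p) (hb1p : b1 ≠ p) (ha2p : a2 ≠ p) (hb2p : b2 ≠ p)
    (ha1b1 : a1 ≠ b1) (ha2b2 : a2 ≠ b2)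
    {L1 L2 : Finset S} (hL1 : L1 ∈ M.lines) (hL2 : L2 ∈ M.lines)
    (hL1eq : L1 = {q, a1, b1}) (hL2eq : L2 = {q, a2, b2})
    (hnc1 : ¬ ∃ L ∈ M.lines, p ∈ L ∧ a1 ∈ L ∧ b2 ∈ L)
    (hmem : ∀ L : Finset S, L ∈ Mp.lines ↔
      (L = {q, a1, b2} ∨ L = {q, b1, a2} ∨ (L ∈ M.lines ∧ L ≠ L1 ∧ L ≠ L2)))
    {X : Finset S} (hXf : FreelyContains Mp X) (hXc : X.card = n)
    (hqX : q ∉ X) (ha1X : a1 ∈ X) (hb2X : b2 ∈ X) : False := by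
  classical
  have hpm : p ∈ X1 ∩ X2 := by rw [hp12]; simp
  have hp1 : p ∈ X1 := (Finset.mem_inter.mp hpm).1
  have hp2 : p ∈ X2 := (Finset.mem_inter.mp hpm).2
  have hX12 : ∀ x : S, x ∈ X1 → x ∈ X2 → x = p := by
    intro x h1 h2
    have : x ∈ X1 ∩ X2 := Finset.mem_inter.mpr ⟨h1, h2⟩
    rw [hp12] at this; exact Finset.mem_singleton.mp this
  have ha1X2 : a1 ∉ X2 := fun h => ha1p (hX12 a1 ha1 h)
  have hb1X2 : b1 ∉ X2 := fun h => hb1p (hX12 b1 hb1 h)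
  have ha2X1 : a2 ∉ X1 := fun h => ha2p (hX12 a2 h ha2)
  have hb2X1 : b2 ∉ X1 := fun h => hb2p (hX12 b2 h hb2)
  have hqp : q ≠ p := fun h => hq1 (h ▸ hp1)
  have hqa1 : q ≠ a1 := fun h => hq1 (h ▸ ha1)
  have hqb1 : q ≠ b1 := fun h => hq1 (h ▸ hb1)
  have hqa2 : q ≠ a2 := fun h => hq2 (h ▸ ha2)
  have hqb2 : q ≠ b2 := fun h => hq2 (h ▸ hb2)
  have ha1a2 : a1 ≠ a2 := fun h => ha2X1 (h ▸ ha1)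
  have ha1b2 : a1 ≠ b2 := fun h => hb2X1 (h ▸ ha1)
  have hb1a2 : b1 ≠ a2 := fun h => ha2X1 (h ▸ hb1)
  have hb1b2 : b1 ≠ b2 := fun h => hb2X1 (h ▸ hb1)
  -- step 1 : b1 ∉ X, a2 ∉ X
  have hb1X : b1 ∉ X := by
    intro hb1X
    obtain ⟨L, hLm, haL, hbL, _⟩ := free1 hXf a1 ha1X b1 hb1X ha1b1
    rcases (hmem L).mp hLm with rfl | rfl | ⟨hLM, hne1, _⟩
    · exact notMem_triple hbL (Ne.symm hqb1) (Ne.symm ha1b1) hb1b2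
    · exact notMem_triple haL (Ne.symm hqa1) ha1b1 ha1a2
    · exact hne1 (uniq_pair M hLM hL1 ha1b1 haL hbL (by rw [hL1eq]; simp) (by rw [hL1eq]; simp))
  have ha2X : a2 ∉ X := by
    intro ha2X
    obtain ⟨L, hLm, haL, hbL, _⟩ := free1 hXf a2 ha2X b2 hb2X ha2b2
    rcases (hmem L).mp hLm with rfl | rfl | ⟨hLM, _, hne2⟩
    · exact notMem_triple haL (Ne.symm hqa2) (Ne.symm ha1a2) ha2b2
    · exact notMem_triple hbL (Ne.symm hqb2) (Ne.symm hb1b2) (Ne.symm ha2b2)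
    · exact hne2 (uniq_pair M hLM hL2 ha2b2 haL hbL (by rw [hL2eq]; simp) (by rw [hL2eq]; simp))
  by_cases hpX : p ∈ X
  · -- p ∈ X
    have hsub : ∀ u ∈ X, u ≠ p → u ∈ X1 ∨ u ∈ X2 := by
      intro u huX hup
      obtain ⟨L, hLm, hpL, huL, _⟩ := free1 hXf p hpX u huX (fun h => hup h.symm)
      rcases (hmem L).mp hLm with rfl | rfl | ⟨hLM, _, _⟩
      · exact absurd (notMem_triple hpL hqp.symm (Ne.symm ha1p) (Ne.symm hb2p)) not_false
      · exact absurd (notMem_triple hpL hqp.symm (Ne.symm hb1p) (Ne.symm ha2p)) not_false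
      · obtain ⟨x, y, hx1, _, hy2, _, hLe⟩ :=
          line_through_common M hrank hf1 hf2 hc1 hc2 hp12 hLM hpL
        have : u ∈ ({p, x, y} : Finset S) := hLe ▸ huL
        rcases mem_triple.mp this with rfl | rfl | rfl
        · exact absurd rfl hup
        · exact Or.inl hx1
        · exact Or.inr hy2
    have hpair : ∀ u t : S, u ∈ X → t ∈ X → u ∈ X1 → u ≠ p → t ∈ X2 → t ≠ p →
        ¬(u = a1 ∧ t = b2) → False := by
      intro u t huX htX hu1 hup ht2 htp hnot
      have hut : u ≠ t := fun h => hup (hX12 u hu1 (h ▸ ht2))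
      obtain ⟨L, hLm, huL, htL, hcard⟩ := free1 hXf u huX t htX hut
      rcases (hmem L).mp hLm with rfl | rfl | ⟨hLM, _, _⟩
      · have hu' : u = a1 := by
          rcases mem_triple.mp huL with rfl | rfl | rfl
          · exact absurd huX hqX
          · rfl
          · exact absurd (hX12 u hu1 hb2) hup
        have ht' : t = b2 := by
          rcases mem_triple.mp htL with rfl | rfl | rfl
          · exact absurd htX hqX
          · exact absurd (hX12 t ha1 ht2) htp
          · rfl
        exact hnot ⟨hu', ht'⟩
      · rcases mem_triple.mp huL with rfl | rfl | rfl
        · exact hqX huX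
        · exact hb1X huX
        · exact absurd (hX12 u hu1 ha2) hup
      · have hpL : p ∈ L := cross_line M hrank hf1 hf2 hc1 hc2 hp12 hu1 ht2 htp hLM huL htL
        have hsub3 : ({p, u, t} : Finset S) ⊆ L ∩ X := by
          intro w hw
          rcases mem_triple.mp hw with rfl | rfl | rfl
          · exact Finset.mem_inter.mpr ⟨hpL, hpX⟩
          · exact Finset.mem_inter.mpr ⟨huL, huX⟩
          · exact Finset.mem_inter.mpr ⟨htL, htX⟩
        have hc3 := Finset.card_le_card hsub3
        rw [hcard, card_triple (Ne.symm hup) (Ne.symm htp) hut] at hc3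
        omega
    set A1 := (X ∩ X1).erase p with hA1
    set A2 := (X ∩ X2).erase p with hA2
    have ha1A1 : a1 ∈ A1 :=
      Finset.mem_erase.mpr ⟨ha1p, Finset.mem_inter.mpr ⟨ha1X, ha1⟩⟩
    have hb2A2 : b2 ∈ A2 :=
      Finset.mem_erase.mpr ⟨hb2p, Finset.mem_inter.mpr ⟨hb2X, hb2⟩⟩
    have hsubA : X.erase p ⊆ A1 ∪ A2 := by
      intro u hu
      obtain ⟨hup, huX⟩ := Finset.mem_erase.mp hu
      rcases hsub u huX hup with h | h
      · exact Finset.mem_union_left _ (Finset.mem_erase.mpr ⟨hup, Finset.mem_inter.mpr ⟨huX, h⟩⟩)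
      · exact Finset.mem_union_right _ (Finset.mem_erase.mpr ⟨hup, Finset.mem_inter.mpr ⟨huX, h⟩⟩)
    have hcardsA : n - 1 ≤ A1.card + A2.card := by
      have h1 : (X.erase p).card = n - 1 := by rw [Finset.card_erase_of_mem hpX, hXc]
      have h2 := Finset.card_le_card hsubA
      have h3 := Finset.card_union_le A1 A2
      omega
    rcases Nat.lt_or_ge A1.card 2 with hA1c | hA1c
    · have hA2c : 2 ≤ A2.card := by omega
      obtain ⟨t, ht, htb2⟩ := Finset.exists_mem_ne (by omega) b2 (s := A2)
      obtain ⟨htp, hti⟩ := Finset.mem_erase.mp ht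
      obtain ⟨htX, ht2⟩ := Finset.mem_inter.mp hti
      exact hpair a1 t ha1X htX ha1 ha1p ht2 htp (fun hh => htb2 hh.2)
    · obtain ⟨u, hu, hua1⟩ := Finset.exists_mem_ne (by omega) a1 (s := A1)
      obtain ⟨hup, hui⟩ := Finset.mem_erase.mp hu
      obtain ⟨huX, hu1⟩ := Finset.mem_inter.mp hui
      exact hpair u b2 huX hb2X hu1 hup hb2 hb2p (fun hh => hua1 hh.1)
  · -- p ∉ X
    obtain ⟨J1, hJ1, hpJ1, ha1J1, _⟩ := free1 hf1 p hp1 a1 ha1 (Ne.symm ha1p)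
    obtain ⟨x, y, hx1, hxp, hy2, hyp, hJ1e⟩ :=
      line_through_common M hrank hf1 hf2 hc1 hc2 hp12 hJ1 hpJ1
    have hxa1 : x = a1 := by
      rcases mem_triple.mp (hJ1e ▸ ha1J1) with h | h | h
      · exact absurd h ha1p
      · exact h.symm
      · exact absurd (h ▸ hy2) ha1X2
    rw [hxa1] at hJ1e
    set w := y with hw
    have hJ1L1 : J1 ≠ L1 := by
      intro h
      rw [h, hL1eq] at hpJ1
      exact notMem_triple hpJ1 hqp.symm (Ne.symm ha1p) (Ne.symm hb1p)
    have hJ1L2 : J1 ≠ L2 := by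
      intro h
      rw [h, hL2eq] at hpJ1
      exact notMem_triple hpJ1 hqp.symm (Ne.symm ha2p) (Ne.symm hb2p)
    have hJ1m : J1 ∈ Mp.lines := (hmem J1).mpr (Or.inr (Or.inr ⟨hJ1, hJ1L1, hJ1L2⟩))
    have hJ1c : (J1 ∩ X).card = 2 := free_line_inter Mp hrank' hXf hXc ha1X hJ1m ha1J1
    have hwJ1 : w ∈ J1 := by rw [hJ1e]; simp
    have hwX : w ∈ X := by
      by_contra hwX
      have hsub2 : J1 ∩ X ⊆ {a1} := by
        intro v hv
        obtain ⟨hvJ, hvX⟩ := Finset.mem_inter.mp hv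
        rcases mem_triple.mp (hJ1e ▸ hvJ) with rfl | rfl | rfl
        · exact absurd hvX hpX
        · simp
        · exact absurd hvX hwX
      have := Finset.card_le_card hsub2
      rw [hJ1c] at this
      simp at this
    have hwb2 : w ≠ b2 := by
      intro h
      exact hnc1 ⟨J1, hJ1, hpJ1, ha1J1, h ▸ hwJ1⟩
    obtain ⟨J2, hJ2, hpJ2, hb2J2, _⟩ := free1 hf2 p hp2 b2 hb2 (Ne.symm hb2p)
    obtain ⟨x', y', hx'1, hx'p, hy'2, hy'p, hJ2e⟩ :=
      line_through_common M hrank hf1 hf2 hc1 hc2 hp12 hJ2 hpJ2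
    have hy'b2 : y' = b2 := by
      rcases mem_triple.mp (hJ2e ▸ hb2J2) with h | h | h
      · exact absurd h hb2p
      · exact absurd (h ▸ hx'1) hb2X1
      · exact h.symm
    rw [hy'b2] at hJ2e
    have hx'J2 : x' ∈ J2 := by rw [hJ2e]; simp
    have hJ2L1 : J2 ≠ L1 := by
      intro h
      rw [h, hL1eq] at hpJ2
      exact notMem_triple hpJ2 hqp.symm (Ne.symm ha1p) (Ne.symm hb1p)
    have hJ2L2 : J2 ≠ L2 := by
      intro h
      rw [h, hL2eq] at hpJ2
      exact notMem_triple hpJ2 hqp.symm (Ne.symm ha2p) (Ne.symm hb2p)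
    have hJ2m : J2 ∈ Mp.lines := (hmem J2).mpr (Or.inr (Or.inr ⟨hJ2, hJ2L1, hJ2L2⟩))
    have hJ2c : (J2 ∩ X).card = 2 := free_line_inter Mp hrank' hXf hXc hb2X hJ2m hb2J2
    have hx'X : x' ∈ X := by
      by_contra hx'X
      have hsub2 : J2 ∩ X ⊆ {b2} := by
        intro v hv
        obtain ⟨hvJ, hvX⟩ := Finset.mem_inter.mp hv
        rcases mem_triple.mp (hJ2e ▸ hvJ) with rfl | rfl | rfl
        · exact absurd hvX hpX
        · exact absurd hvX hx'X
        · simp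
      have := Finset.card_le_card hsub2
      rw [hJ2c] at this
      simp at this
    have hx'a1 : x' ≠ a1 := by
      intro h
      exact hnc1 ⟨J2, hJ2, hpJ2, h ▸ hx'J2, hb2J2⟩
    -- edge {x', w}
    have hx'w : x' ≠ w := fun h => hx'p (hX12 x' hx'1 (h ▸ hy2))
    obtain ⟨L, hLm, hx'L, hwL, hLc⟩ := free1 hXf x' hx'X w hwX hx'w
    rcases (hmem L).mp hLm with rfl | rfl | ⟨hLM, _, _⟩
    · have hx'q : x' ≠ q := fun h => hqX (h ▸ hx'X)
      have hx'b2 : x' ≠ b2 := fun h => hb2X1 (h ▸ hx'1)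
      exact notMem_triple hx'L hx'q hx'a1 hx'b2
    · have hwq : w ≠ q := fun h => hqX (h ▸ hwX)
      have hwb1 : w ≠ b1 := fun h => hb1X (h ▸ hwX)
      have hwa2 : w ≠ a2 := fun h => ha2X (h ▸ hwX)
      exact notMem_triple hwL hwq hwb1 hwa2
    · have hpL : p ∈ L := cross_line M hrank hf1 hf2 hc1 hc2 hp12 hx'1 hy2 hyp hLM hx'L hwL
      have hLJ1 : L = J1 := uniq_pair M hLM hJ1 (Ne.symm hyp) hpL hwL hpJ1 hwJ1
      rw [hLJ1, hJ1e] at hx'L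
      exact notMem_triple hx'L hx'p hx'a1 hx'w

end Cases

section CaseB

variable {S : Type} [DecidableEq S] [Fintype S]

private lemma caseB {n : ℕ} (M Mp : PSTS S)
    (hrank : ∀ x : S, pointRank M x = n - 1)
    (hrank' : ∀ x : S, pointRank Mp x = n - 1)
    {X1 X2 : Finset S}
    (hf1 : FreelyContains M X1) (hf2 : FreelyContains M X2)
    (hc1 : X1.card = n) (hc2 : X2.card = n) (hn : 4 ≤ n)
    {p q a1 b1 a2 b2 : S}
    (hp12 : X1 ∩ X2 = {p})
    (hq1 : q ∉ X1) (hq2 : q ∉ X2)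
    (ha1 : a1 ∈ X1) (hb1 : b1 ∈ X1) (ha2 : a2 ∈ X2) (hb2 : b2 ∈ X2)
    (ha1p : a1 ≠ p) (hb1p : b1 ≠ p) (ha2p : a2 ≠ p) (hb2p : b2 ≠ p)
    (ha1b1 : a1 ≠ b1) (ha2b2 : a2 ≠ b2)
    {L1 L2 : Finset S} (hL1 : L1 ∈ M.lines) (hL2 : L2 ∈ M.lines)
    (hL1eq : L1 = {q, a1, b1}) (hL2eq : L2 = {q, a2, b2})
    (hexact : ∀ X : Finset S, X.card = n → FreelyContains M X → X = X1 ∨ X = X2)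
    (hmem : ∀ L : Finset S, L ∈ Mp.lines ↔
      (L = {q, a1, b2} ∨ L = {q, b1, a2} ∨ (L ∈ M.lines ∧ L ≠ L1 ∧ L ≠ L2)))
    {X : Finset S} (hXf : FreelyContains Mp X) (hXc : X.card = n)
    (hqX : q ∈ X) (ha1X : a1 ∈ X) (ha2X : a2 ∈ X) : False := by
  classical
  have hpm : p ∈ X1 ∩ X2 := by rw [hp12]; simp
  have hp1 : p ∈ X1 := (Finset.mem_inter.mp hpm).1
  have hp2 : p ∈ X2 := (Finset.mem_inter.mp hpm).2
  have hX12 : ∀ x : S, x ∈ X1 → x ∈ X2 → x = p := by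
    intro x h1 h2
    have : x ∈ X1 ∩ X2 := Finset.mem_inter.mpr ⟨h1, h2⟩
    rw [hp12] at this; exact Finset.mem_singleton.mp this
  have ha1X2 : a1 ∉ X2 := fun h => ha1p (hX12 a1 ha1 h)
  have hb1X2 : b1 ∉ X2 := fun h => hb1p (hX12 b1 hb1 h)
  have ha2X1 : a2 ∉ X1 := fun h => ha2p (hX12 a2 h ha2)
  have hb2X1 : b2 ∉ X1 := fun h => hb2p (hX12 b2 h hb2)
  have hqp : q ≠ p := fun h => hq1 (h ▸ hp1)
  have hqa1 : q ≠ a1 := fun h => hq1 (h ▸ ha1)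
  have hqb1 : q ≠ b1 := fun h => hq1 (h ▸ hb1)
  have hqa2 : q ≠ a2 := fun h => hq2 (h ▸ ha2)
  have hqb2 : q ≠ b2 := fun h => hq2 (h ▸ hb2)
  have ha1a2 : a1 ≠ a2 := fun h => ha2X1 (h ▸ ha1)
  have ha1b2 : a1 ≠ b2 := fun h => hb2X1 (h ▸ ha1)
  have hb1a2 : b1 ≠ a2 := fun h => ha2X1 (h ▸ hb1)
  have hb1b2 : b1 ≠ b2 := fun h => hb2X1 (h ▸ hb1)
  have hL1L2 : L1 ≠ L2 := by
    intro h
    have : a1 ∈ L2 := by rw [← h, hL1eq]; simp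
    rw [hL2eq] at this
    exact notMem_triple this hqa1.symm ha1a2 ha1b2
  have hN1m : ({q, a1, b2} : Finset S) ∈ Mp.lines := (hmem _).mpr (Or.inl rfl)
  have hN2m : ({q, b1, a2} : Finset S) ∈ Mp.lines := (hmem _).mpr (Or.inr (Or.inl rfl))
  have hN1c : (({q, a1, b2} : Finset S) ∩ X).card = 2 :=
    free_line_inter Mp hrank' hXf hXc hqX hN1m (by simp)
  have hN2c : (({q, b1, a2} : Finset S) ∩ X).card = 2 :=
    free_line_inter Mp hrank' hXf hXc hqX hN2m (by simp)
  have hb2X : b2 ∉ X := by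
    intro hb2X
    have hsub : ({q, a1, b2} : Finset S) ⊆ ({q, a1, b2} : Finset S) ∩ X := by
      intro v hv
      refine Finset.mem_inter.mpr ⟨hv, ?_⟩
      rcases mem_triple.mp hv with rfl | rfl | rfl
      exacts [hqX, ha1X, hb2X]
    have := Finset.card_le_card hsub
    rw [hN1c, card_triple hqa1 hqb2 ha1b2] at this
    omega
  have hb1X : b1 ∉ X := by
    intro hb1X
    have hsub : ({q, b1, a2} : Finset S) ⊆ ({q, b1, a2} : Finset S) ∩ X := by
      intro v hv
      refine Finset.mem_inter.mpr ⟨hv, ?_⟩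
      rcases mem_triple.mp hv with rfl | rfl | rfl
      exacts [hqX, hb1X, ha2X]
    have := Finset.card_le_card hsub
    rw [hN2c, card_triple hqb1 hqa2 hb1a2] at this
    omega
  by_cases hpX : p ∈ X
  · obtain ⟨L, hLm, hpL, hqL, _⟩ := free1 hXf p hpX q hqX hqp.symm
    rcases (hmem L).mp hLm with rfl | rfl | ⟨hLM, _, _⟩
    · exact notMem_triple hpL hqp.symm ha1p.symm hb2p.symm
    · exact notMem_triple hpL hqp.symm hb1p.symm ha2p.symm
    · obtain ⟨x, y, hx1, _, hy2, _, hLe⟩ :=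
        line_through_common M hrank hf1 hf2 hc1 hc2 hp12 hLM hpL
      rcases mem_triple.mp (hLe ▸ hqL) with h | h | h
      · exact hqp h
      · exact hq1 (h ▸ hx1)
      · exact hq2 (h ▸ hy2)
  · -- p ∉ X
    obtain ⟨J1, hJ1, hpJ1, ha1J1, _⟩ := free1 hf1 p hp1 a1 ha1 (Ne.symm ha1p)
    obtain ⟨x, y, hx1, hxp, hy2, hyp, hJ1e⟩ :=
      line_through_common M hrank hf1 hf2 hc1 hc2 hp12 hJ1 hpJ1
    have hxa1 : x = a1 := by
      rcases mem_triple.mp (hJ1e ▸ ha1J1) with h | h | h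
      · exact absurd h ha1p
      · exact h.symm
      · exact absurd (h ▸ hy2) ha1X2
    rw [hxa1] at hJ1e
    set w := y with hwdef
    have hpL1 : p ∉ L1 := by
      rw [hL1eq]; intro h
      exact notMem_triple h hqp.symm ha1p.symm hb1p.symm
    have hpL2 : p ∉ L2 := by
      rw [hL2eq]; intro h
      exact notMem_triple h hqp.symm ha2p.symm hb2p.symm
    have hJ1L1 : J1 ≠ L1 := fun h => hpL1 (h ▸ hpJ1)
    have hJ1L2 : J1 ≠ L2 := fun h => hpL2 (h ▸ hpJ1)
    have hJ1m : J1 ∈ Mp.lines := (hmem J1).mpr (Or.inr (Or.inr ⟨hJ1, hJ1L1, hJ1L2⟩))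
    have hJ1c : (J1 ∩ X).card = 2 := free_line_inter Mp hrank' hXf hXc ha1X hJ1m ha1J1
    have hwJ1 : w ∈ J1 := by rw [hJ1e]; simp
    have hwX : w ∈ X := by
      by_contra hwX
      have hsub2 : J1 ∩ X ⊆ {a1} := by
        intro v hv
        obtain ⟨hvJ, hvX⟩ := Finset.mem_inter.mp hv
        rcases mem_triple.mp (hJ1e ▸ hvJ) with rfl | rfl | rfl
        · exact absurd hvX hpX
        · simp
        · exact absurd hvX hwX
      have := Finset.card_le_card hsub2
      rw [hJ1c] at this
      simp at this
    obtain ⟨J2, hJ2, hpJ2, ha2J2, _⟩ := free1 hf2 p hp2 a2 ha2 (Ne.symm ha2p)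
    obtain ⟨x', y', hx'1, hx'p, hy'2, hy'p, hJ2e⟩ :=
      line_through_common M hrank hf1 hf2 hc1 hc2 hp12 hJ2 hpJ2
    have hy'a2 : y' = a2 := by
      rcases mem_triple.mp (hJ2e ▸ ha2J2) with h | h | h
      · exact absurd h ha2p
      · exact absurd (h ▸ hx'1) ha2X1
      · exact h.symm
    rw [hy'a2] at hJ2e
    have hx'J2 : x' ∈ J2 := by rw [hJ2e]; simp
    have hJ2L1 : J2 ≠ L1 := fun h => hpL1 (h ▸ hpJ2)
    have hJ2L2 : J2 ≠ L2 := fun h => hpL2 (h ▸ hpJ2)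
    have hJ2m : J2 ∈ Mp.lines := (hmem J2).mpr (Or.inr (Or.inr ⟨hJ2, hJ2L1, hJ2L2⟩))
    have hJ2c : (J2 ∩ X).card = 2 := free_line_inter Mp hrank' hXf hXc ha2X hJ2m ha2J2
    have hx'X : x' ∈ X := by
      by_contra hx'X
      have hsub2 : J2 ∩ X ⊆ {a2} := by
        intro v hv
        obtain ⟨hvJ, hvX⟩ := Finset.mem_inter.mp hv
        rcases mem_triple.mp (hJ2e ▸ hvJ) with rfl | rfl | rfl
        · exact absurd hvX hpX
        · exact absurd hvX hx'X
        · simp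
      have := Finset.card_le_card hsub2
      rw [hJ2c] at this
      simp at this
    by_cases hwa : x' = a1
    · -- collinear case : J1 = J2 and w = a2
      have hJJ : J1 = J2 :=
        uniq_pair M hJ1 hJ2 (Ne.symm ha1p) hpJ1 ha1J1 hpJ2 (hwa ▸ hx'J2)
      have hwa2 : w = a2 := by
        have : a2 ∈ J1 := by rw [hJJ, hJ2e]; simp
        rcases mem_triple.mp (hJ1e ▸ this) with h | h | h
        · exact absurd h ha2p
        · exact absurd h.symm ha1a2
        · exact h.symm
      -- X ∩ X1 = {a1}, X ∩ X2 = {a2}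
      have hL1c1 : (L1 ∩ X1).card = 2 := free_line_inter M hrank hf1 hc1 ha1 hL1 (by rw [hL1eq]; simp)
      have hL2c2 : (L2 ∩ X2).card = 2 := free_line_inter M hrank hf2 hc2 ha2 hL2 (by rw [hL2eq]; simp)
      have hqL1 : q ∈ L1 := by rw [hL1eq]; simp
      have hqL2 : q ∈ L2 := by rw [hL2eq]; simp
      have hXX1 : ∀ u ∈ X, u ∈ X1 → u = a1 := by
        intro u huX hu1
        by_cases huq : u = q
        · exact absurd (huq ▸ hu1) hq1
        obtain ⟨L, hLm, hqL, huL, _⟩ := free1 hXf q hqX u huX (fun h => huq h.symm)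
        rcases (hmem L).mp hLm with rfl | rfl | ⟨hLM, hne1, _⟩
        · rcases mem_triple.mp huL with h | h | h
          · exact absurd h huq
          · exact h
          · exact absurd (h ▸ hu1) hb2X1
        · rcases mem_triple.mp huL with h | h | h
          · exact absurd h huq
          · exact absurd (h ▸ huX) hb1X
          · exact absurd (h ▸ hu1) ha2X1
        · have hLX1 : (L ∩ X1).card = 2 := free_line_inter M hrank hf1 hc1 hu1 hLM huL
          exact absurd (side_unique hf1 hq1 hLM hL1 hqL hqL1 hLX1 hL1c1) hne1
      have hXX2 : ∀ u ∈ X, u ∈ X2 → u = a2 := by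
        intro u huX hu2
        by_cases huq : u = q
        · exact absurd (huq ▸ hu2) hq2
        obtain ⟨L, hLm, hqL, huL, _⟩ := free1 hXf q hqX u huX (fun h => huq h.symm)
        rcases (hmem L).mp hLm with rfl | rfl | ⟨hLM, _, hne2⟩
        · rcases mem_triple.mp huL with h | h | h
          · exact absurd h huq
          · exact absurd (h ▸ hu2) ha1X2
          · exact absurd (h ▸ huX) hb2X
        · rcases mem_triple.mp huL with h | h | h
          · exact absurd h huq
          · exact absurd (h ▸ hu2) hb1X2
          · exact h
        · have hLX2 : (L ∩ X2).card = 2 := free_line_inter M hrank hf2 hc2 hu2 hLM huL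
          exact absurd (side_unique hf2 hq2 hLM hL2 hqL hqL2 hLX2 hL2c2) hne2
      -- intersections of L1, L2 with X
      have hL1iX : L1 ∩ X = {q, a1} := by
        ext v
        constructor
        · intro hv
          obtain ⟨hvL, hvX⟩ := Finset.mem_inter.mp hv
          rcases mem_triple.mp (hL1eq ▸ hvL) with rfl | rfl | rfl
          · simp
          · simp
          · exact absurd hvX hb1X
        · intro hv
          rcases Finset.mem_insert.mp hv with rfl | hv
          · exact Finset.mem_inter.mpr ⟨hqL1, hqX⟩
          · rw [Finset.mem_singleton] at hv; subst hv
            exact Finset.mem_inter.mpr ⟨by rw [hL1eq]; simp, ha1X⟩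
      have hL2iX : L2 ∩ X = {q, a2} := by
        ext v
        constructor
        · intro hv
          obtain ⟨hvL, hvX⟩ := Finset.mem_inter.mp hv
          rcases mem_triple.mp (hL2eq ▸ hvL) with rfl | rfl | rfl
          · simp
          · simp
          · exact absurd hvX hb2X
        · intro hv
          rcases Finset.mem_insert.mp hv with rfl | hv
          · exact Finset.mem_inter.mpr ⟨hqL2, hqX⟩
          · rw [Finset.mem_singleton] at hv; subst hv
            exact Finset.mem_inter.mpr ⟨by rw [hL2eq]; simp, ha2X⟩
      have hL1cX : (L1 ∩ X).card = 2 := by rw [hL1iX, Finset.card_pair hqa1]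
      have hL2cX : (L2 ∩ X).card = 2 := by rw [hL2iX, Finset.card_pair hqa2]
      -- X is freely contained in M
      have honly1 : ∀ K, K ∈ M.lines → (K ∩ X).card = 2 → b1 ∈ K → K = L1 := by
        intro K hK hKc hb1K
        have h2 : (K ∩ X1).card = 2 := free_line_inter M hrank hf1 hc1 hb1 hK hb1K
        obtain ⟨x0, hx0, hx0b⟩ := Finset.exists_mem_ne (by omega) b1 (s := K ∩ X1)
        obtain ⟨hx0K, hx0X1⟩ := Finset.mem_inter.mp hx0
        by_cases hx0X : x0 ∈ X
        · have hx0a1 : x0 = a1 := hXX1 x0 hx0X hx0X1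
          exact uniq_pair M hK hL1 ha1b1 (hx0a1 ▸ hx0K) hb1K
            (by rw [hL1eq]; simp) (by rw [hL1eq]; simp)
        · exfalso
          obtain ⟨z, hz1, hz2, hKe⟩ := third_point (M.card3 K hK) hb1K hx0K (Ne.symm hx0b)
          have hsub : K ∩ X ⊆ {z} := by
            intro v hv
            obtain ⟨hvK, hvX⟩ := Finset.mem_inter.mp hv
            rcases mem_triple.mp (hKe ▸ hvK) with rfl | rfl | rfl
            · exact absurd hvX hb1X
            · exact absurd hvX hx0X
            · simp
          have := Finset.card_le_card hsub
          rw [hKc] at this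
          simp at this
      have honly2 : ∀ K, K ∈ M.lines → (K ∩ X).card = 2 → b2 ∈ K → K = L2 := by
        intro K hK hKc hb2K
        have h2 : (K ∩ X2).card = 2 := free_line_inter M hrank hf2 hc2 hb2 hK hb2K
        obtain ⟨x0, hx0, hx0b⟩ := Finset.exists_mem_ne (by omega) b2 (s := K ∩ X2)
        obtain ⟨hx0K, hx0X2⟩ := Finset.mem_inter.mp hx0
        by_cases hx0X : x0 ∈ X
        · have hx0a2 : x0 = a2 := hXX2 x0 hx0X hx0X2
          exact uniq_pair M hK hL2 ha2b2 (hx0a2 ▸ hx0K) hb2K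
            (by rw [hL2eq]; simp) (by rw [hL2eq]; simp)
        · exfalso
          obtain ⟨z, hz1, hz2, hKe⟩ := third_point (M.card3 K hK) hb2K hx0K (Ne.symm hx0b)
          have hsub : K ∩ X ⊆ {z} := by
            intro v hv
            obtain ⟨hvK, hvX⟩ := Finset.mem_inter.mp hv
            rcases mem_triple.mp (hKe ▸ hvK) with rfl | rfl | rfl
            · exact absurd hvX hb2X
            · exact absurd hvX hx0X
            · simp
          have := Finset.card_le_card hsub
          rw [hKc] at this
          simp at this
      have haux1 : ∀ K, K ∈ M.lines → (K ∩ X).card = 2 → K ≠ L1 →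
          ∀ r, r ∈ L1 → r ∈ K → r ∈ X := by
        intro K hK hKc hKne r hr1 hrK
        rcases mem_triple.mp (hL1eq ▸ hr1) with rfl | rfl | rfl
        · exact hqX
        · exact ha1X
        · exact absurd (honly1 K hK hKc hrK) hKne
      have haux2 : ∀ K, K ∈ M.lines → (K ∩ X).card = 2 → K ≠ L2 →
          ∀ r, r ∈ L2 → r ∈ K → r ∈ X := by
        intro K hK hKc hKne r hr2 hrK
        rcases mem_triple.mp (hL2eq ▸ hr2) with rfl | rfl | rfl
        · exact hqX
        · exact ha2X
        · exact absurd (honly2 K hK hKc hrK) hKne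
      have hfreeM : FreelyContains M X := by
        apply mkFree
        · intro u huX v hvX huv
          obtain ⟨L, hLm, huL, hvL, hLc⟩ := free1 hXf u huX v hvX huv
          rcases (hmem L).mp hLm with rfl | rfl | ⟨hLM, _, _⟩
          · have hu' : u = q ∨ u = a1 := by
              rcases mem_triple.mp huL with rfl | rfl | rfl
              · exact Or.inl rfl
              · exact Or.inr rfl
              · exact absurd huX hb2X
            have hv' : v = q ∨ v = a1 := by
              rcases mem_triple.mp hvL with rfl | rfl | rfl
              · exact Or.inl rfl
              · exact Or.inr rfl
              · exact absurd hvX hb2X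
            refine ⟨L1, hL1, ?_, ?_, hL1cX⟩
            · rcases hu' with rfl | rfl <;> [exact hqL1; exact (by rw [hL1eq]; simp)]
            · rcases hv' with rfl | rfl <;> [exact hqL1; exact (by rw [hL1eq]; simp)]
          · have hu' : u = q ∨ u = a2 := by
              rcases mem_triple.mp huL with rfl | rfl | rfl
              · exact Or.inl rfl
              · exact absurd huX hb1X
              · exact Or.inr rfl
            have hv' : v = q ∨ v = a2 := by
              rcases mem_triple.mp hvL with rfl | rfl | rfl
              · exact Or.inl rfl
              · exact absurd hvX hb1X
              · exact Or.inr rfl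
            refine ⟨L2, hL2, ?_, ?_, hL2cX⟩
            · rcases hu' with rfl | rfl <;> [exact hqL2; exact (by rw [hL2eq]; simp)]
            · rcases hv' with rfl | rfl <;> [exact hqL2; exact (by rw [hL2eq]; simp)]
          · exact ⟨L, hLM, huL, hvL, hLc⟩
        · intro Sx Sy hSxm hSxc hSym hSyc hne r hrx hry
          by_cases e1 : Sx = L1
          · by_cases e3 : Sy = L1
            · exact absurd (e1.trans e3.symm) hne
            · exact haux1 Sy hSym hSyc e3 r (e1 ▸ hrx) hry
          by_cases e2 : Sx = L2
          · by_cases e4 : Sy = L2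
            · exact absurd (e2.trans e4.symm) hne
            · exact haux2 Sy hSym hSyc e4 r (e2 ▸ hrx) hry
          by_cases e3 : Sy = L1
          · exact haux1 Sx hSxm hSxc e1 r (e3 ▸ hry) hrx
          by_cases e4 : Sy = L2
          · exact haux2 Sx hSxm hSxc e2 r (e4 ▸ hry) hrx
          · exact free2 hXf Sx Sy ((hmem Sx).mpr (Or.inr (Or.inr ⟨hSxm, e1, e2⟩))) hSxc
              ((hmem Sy).mpr (Or.inr (Or.inr ⟨hSym, e3, e4⟩))) hSyc hne r hrx hry
      rcases hexact X hXc hfreeM with rfl | rfl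
      · exact hq1 hqX
      · exact hq2 hqX
    · -- x' ≠ a1
      have hwa2 : w ≠ a2 := by
        intro h
        have hJJ : J1 = J2 :=
          uniq_pair M hJ1 hJ2 (Ne.symm ha2p) hpJ1 (h ▸ hwJ1) hpJ2 ha2J2
        apply hwa
        have : x' ∈ J1 := hJJ ▸ hx'J2
        rcases mem_triple.mp (hJ1e ▸ this) with hh | hh | hh
        · exact absurd hh hx'p
        · exact hh
        · exact absurd (hh ▸ hy2) (fun h2 => hx'p (hX12 x' hx'1 h2))
      have hx'w : x' ≠ w := fun h => hx'p (hX12 x' hx'1 (h ▸ hy2))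
      obtain ⟨L, hLm, hx'L, hwL, hLc⟩ := free1 hXf x' hx'X w hwX hx'w
      rcases (hmem L).mp hLm with rfl | rfl | ⟨hLM, _, _⟩
      · have hx'q : x' ≠ q := fun h => hq1 (h ▸ hx'1)
        have hx'b2 : x' ≠ b2 := fun h => hb2X1 (h ▸ hx'1)
        exact notMem_triple hx'L hx'q hwa hx'b2
      · have hwq : w ≠ q := fun h => hq2 (h ▸ hy2)
        have hwb1 : w ≠ b1 := fun h => hb1X2 (h ▸ hy2)
        exact notMem_triple hwL hwq hwb1 hwa2
      · have hpL : p ∈ L := cross_line M hrank hf1 hf2 hc1 hc2 hp12 hx'1 hy2 hyp hLM hx'L hwL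
        have hLJ1 : L = J1 := uniq_pair M hLM hJ1 (Ne.symm hyp) hpL hwL hpJ1 hwJ1
        rw [hLJ1, hJ1e] at hx'L
        exact notMem_triple hx'L hx'p hwa hx'w

end CaseB

section Main

variable {S : Type} [DecidableEq S] [Fintype S]

private lemma card_filter_insert {s : Finset (Finset S)} {L : Finset S} (h : L ∉ s) (x : S) :
    ((insert L s).filter (fun K => x ∈ K)).card
      = (if x ∈ L then 1 else 0) + (s.filter (fun K => x ∈ K)).card := by
  rw [Finset.filter_insert]
  by_cases hx : x ∈ L
  · rw [if_pos hx, if_pos hx,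
      Finset.card_insert_of_notMem (fun hc => h (Finset.mem_filter.mp hc).1)]
    omega
  · rw [if_neg hx, if_neg hx]
    omega

private lemma switch_main {n : ℕ} (hn : 4 ≤ n) (M : PSTS S)
    (hbin : IsBinomial M (n + 1)) (hex : ExactlyKGraphs M n 2) :
    ∃ M' : PSTS S, IsBinomial M' (n + 1) ∧ ExactlyKGraphs M' n 0 := by
  classical
  obtain ⟨hcS, hclines, hrk⟩ := hbin
  have hrank : ∀ x : S, pointRank M x = n - 1 := by
    intro x; have := hrk x; omega
  obtain ⟨f, hfinj, hfprop, hfexact⟩ := hex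
  have hc1 : (f 0).card = n := (hfprop 0).1
  have hc2 : (f 1).card = n := (hfprop 1).1
  have hfree1 : FreelyContains M (f 0) := (hfprop 0).2
  have hfree2 : FreelyContains M (f 1) := (hfprop 1).2
  have hne : f 0 ≠ f 1 := fun h => absurd (hfinj h) (by decide)
  have hexact : ∀ X : Finset S, X.card = n → FreelyContains M X → X = f 0 ∨ X = f 1 := by
    intro X h1 h2
    obtain ⟨i, hi⟩ := hfexact X h1 h2
    fin_cases i
    · exact Or.inl hi
    · exact Or.inr hi
  obtain ⟨p, hp12⟩ := common_point M hrank hcS hfree1 hfree2 hc1 hc2 hne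
  have hpm : p ∈ f 0 ∩ f 1 := by rw [hp12]; simp
  have hp1 : p ∈ f 0 := (Finset.mem_inter.mp hpm).1
  have hp2 : p ∈ f 1 := (Finset.mem_inter.mp hpm).2
  have hX12 : ∀ x : S, x ∈ f 0 → x ∈ f 1 → x = p := by
    intro x h1 h2
    have : x ∈ f 0 ∩ f 1 := Finset.mem_inter.mpr ⟨h1, h2⟩
    rw [hp12] at this; exact Finset.mem_singleton.mp this
  -- find q outside both
  have hchoose2 : (n + 1).choose 2 = n.choose 1 + n.choose 2 := Nat.choose_succ_succ' n 1
  rw [Nat.choose_one_right] at hchoose2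
  have hnc2 : n ≤ n.choose 2 := by
    rw [Nat.choose_two_right]
    rw [Nat.le_div_iff_mul_le (by norm_num)]
    exact Nat.mul_le_mul_left n (by omega)
  have hucard : (f 0 ∪ f 1).card = 2 * n - 1 := by
    have := Finset.card_union_add_card_inter (f 0) (f 1)
    rw [hc1, hc2, hp12, Finset.card_singleton] at this
    omega
  have hZne : ((f 0 ∪ f 1)ᶜ : Finset S).Nonempty := by
    rw [← Finset.card_pos, Finset.card_compl, hucard, hcS]
    omega
  obtain ⟨q, hqZ⟩ := hZne
  have hqU := Finset.mem_compl.mp hqZ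
  have hq1 : q ∉ f 0 := fun h => hqU (Finset.mem_union_left _ h)
  have hq2 : q ∉ f 1 := fun h => hqU (Finset.mem_union_right _ h)
  have hqp : q ≠ p := fun h => hq1 (h ▸ hp1)
  -- the two sides through q
  obtain ⟨L1, hL1, hqL1, hL1c⟩ := side_exists M hcS hfree1 hc1 hq1
  obtain ⟨L2, hL2, hqL2, hL2c⟩ := side_exists M hcS hfree2 hc2 hq2
  have hpL1 : p ∉ L1 := by
    intro h
    obtain ⟨x, y, hx1, _, hy2, _, hLe⟩ :=
      line_through_common M hrank hfree1 hfree2 hc1 hc2 hp12 hL1 h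
    rcases mem_triple.mp (hLe ▸ hqL1) with hh | hh | hh
    · exact hqp hh
    · exact hq1 (hh ▸ hx1)
    · exact hq2 (hh ▸ hy2)
  have hpL2 : p ∉ L2 := by
    intro h
    obtain ⟨x, y, hx1, _, hy2, _, hLe⟩ :=
      line_through_common M hrank hfree1 hfree2 hc1 hc2 hp12 hL2 h
    rcases mem_triple.mp (hLe ▸ hqL2) with hh | hh | hh
    · exact hqp hh
    · exact hq1 (hh ▸ hx1)
    · exact hq2 (hh ▸ hy2)
  obtain ⟨a1, b1, ha1b1, hL1X1⟩ := Finset.card_eq_two.mp hL1c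
  have ha1i : a1 ∈ L1 ∩ f 0 := by rw [hL1X1]; simp
  have hb1i : b1 ∈ L1 ∩ f 0 := by rw [hL1X1]; simp
  have ha1L1 : a1 ∈ L1 := (Finset.mem_inter.mp ha1i).1
  have hb1L1 : b1 ∈ L1 := (Finset.mem_inter.mp hb1i).1
  have ha1 : a1 ∈ f 0 := (Finset.mem_inter.mp ha1i).2
  have hb1 : b1 ∈ f 0 := (Finset.mem_inter.mp hb1i).2
  have ha1p : a1 ≠ p := fun h => hpL1 (h ▸ ha1L1)
  have hb1p : b1 ≠ p := fun h => hpL1 (h ▸ hb1L1)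
  have hqa1 : q ≠ a1 := fun h => hq1 (h ▸ ha1)
  have hqb1 : q ≠ b1 := fun h => hq1 (h ▸ hb1)
  have hL1eq : L1 = {q, a1, b1} :=
    eq_triple_of_card_three (M.card3 L1 hL1) hqL1 ha1L1 hb1L1 hqa1 hqb1 ha1b1
  obtain ⟨c, d, hcd, hL2X2⟩ := Finset.card_eq_two.mp hL2c
  have hci : c ∈ L2 ∩ f 1 := by rw [hL2X2]; simp
  have hdi : d ∈ L2 ∩ f 1 := by rw [hL2X2]; simp
  have hcL2 : c ∈ L2 := (Finset.mem_inter.mp hci).1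
  have hdL2 : d ∈ L2 := (Finset.mem_inter.mp hdi).1
  have hcX2 : c ∈ f 1 := (Finset.mem_inter.mp hci).2
  have hdX2 : d ∈ f 1 := (Finset.mem_inter.mp hdi).2
  have hcp : c ≠ p := fun h => hpL2 (h ▸ hcL2)
  have hdp : d ≠ p := fun h => hpL2 (h ▸ hdL2)
  have hqc : q ≠ c := fun h => hq2 (h ▸ hcX2)
  have hqd : q ≠ d := fun h => hq2 (h ▸ hdX2)
  have ha1c : a1 ≠ c := fun h => ha1p (hX12 a1 ha1 (h ▸ hcX2))
  have ha1d : a1 ≠ d := fun h => ha1p (hX12 a1 ha1 (h ▸ hdX2))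
  have hb1c : b1 ≠ c := fun h => hb1p (hX12 b1 hb1 (h ▸ hcX2))
  have hb1d : b1 ≠ d := fun h => hb1p (hX12 b1 hb1 (h ▸ hdX2))
  have hpa1 : p ≠ a1 := Ne.symm ha1p
  -- choose the labelling of {c, d} as (a2, b2)
  have hlabel : ∃ a2 b2 : S, a2 ≠ b2 ∧ a2 ∈ L2 ∧ b2 ∈ L2 ∧ a2 ∈ f 1 ∧ b2 ∈ f 1 ∧
      (¬∃ L ∈ M.lines, p ∈ L ∧ a1 ∈ L ∧ b2 ∈ L) ∧
      (¬∃ L ∈ M.lines, p ∈ L ∧ b1 ∈ L ∧ a2 ∈ L) := by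
    by_cases hgood : (¬∃ L ∈ M.lines, p ∈ L ∧ a1 ∈ L ∧ d ∈ L) ∧
        (¬∃ L ∈ M.lines, p ∈ L ∧ b1 ∈ L ∧ c ∈ L)
    · exact ⟨c, d, hcd, hcL2, hdL2, hcX2, hdX2, hgood.1, hgood.2⟩
    · rw [not_and_or, not_not, not_not] at hgood
      refine ⟨d, c, hcd.symm, hdL2, hcL2, hdX2, hcX2, ?_, ?_⟩
      · rintro ⟨L, hL, hpL, ha1L, hcL⟩
        rcases hgood with ⟨K, hK, hpK, ha1K, hdK⟩ | ⟨K, hK, hpK, hb1K, hcK⟩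
        · have hLK : L = K := uniq_pair M hL hK hpa1 hpL ha1L hpK ha1K
          have hsub : ({p, a1, c, d} : Finset S) ⊆ K := by
            intro v hv
            simp only [Finset.mem_insert, Finset.mem_singleton] at hv
            rcases hv with rfl | rfl | rfl | rfl
            exacts [hpK, ha1K, hLK ▸ hcL, hdK]
          have hc4 : ({p, a1, c, d} : Finset S).card = 4 := by
            rw [Finset.card_insert_of_notMem (by simp [hpa1, Ne.symm hcp, Ne.symm hdp]),
              card_triple ha1c ha1d hcd]
          have := Finset.card_le_card hsub
          rw [hc4, M.card3 K hK] at this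
          omega
        · have hLK : L = K := uniq_pair M hL hK (Ne.symm hcp) hpL hcL hpK hcK
          have h2 : (K ∩ f 0).card = 2 := free_line_inter M hrank hfree1 hc1 ha1 hK (hLK ▸ ha1L)
          have hsub : ({p, a1, b1} : Finset S) ⊆ K ∩ f 0 := by
            intro v hv
            rcases mem_triple.mp hv with rfl | rfl | rfl
            · exact Finset.mem_inter.mpr ⟨hpK, hp1⟩
            · exact Finset.mem_inter.mpr ⟨hLK ▸ ha1L, ha1⟩
            · exact Finset.mem_inter.mpr ⟨hb1K, hb1⟩
          have := Finset.card_le_card hsub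
          rw [h2, card_triple hpa1 (Ne.symm hb1p) ha1b1] at this
          omega
      · rintro ⟨L, hL, hpL, hb1L, hdL⟩
        rcases hgood with ⟨K, hK, hpK, ha1K, hdK⟩ | ⟨K, hK, hpK, hb1K, hcK⟩
        · have hLK : L = K := uniq_pair M hL hK (Ne.symm hdp) hpL hdL hpK hdK
          have h2 : (K ∩ f 0).card = 2 := free_line_inter M hrank hfree1 hc1 ha1 hK ha1K
          have hsub : ({p, a1, b1} : Finset S) ⊆ K ∩ f 0 := by
            intro v hv
            rcases mem_triple.mp hv with rfl | rfl | rfl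
            · exact Finset.mem_inter.mpr ⟨hpK, hp1⟩
            · exact Finset.mem_inter.mpr ⟨ha1K, ha1⟩
            · exact Finset.mem_inter.mpr ⟨hLK ▸ hb1L, hb1⟩
          have := Finset.card_le_card hsub
          rw [h2, card_triple hpa1 (Ne.symm hb1p) ha1b1] at this
          omega
        · have hLK : L = K := uniq_pair M hL hK (Ne.symm hb1p) hpL hb1L hpK hb1K
          have hsub : ({p, b1, c, d} : Finset S) ⊆ K := by
            intro v hv
            simp only [Finset.mem_insert, Finset.mem_singleton] at hv
            rcases hv with rfl | rfl | rfl | rfl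
            exacts [hpK, hb1K, hcK, hLK ▸ hdL]
          have hc4 : ({p, b1, c, d} : Finset S).card = 4 := by
            rw [Finset.card_insert_of_notMem
                (by simp [Ne.symm hb1p, Ne.symm hcp, Ne.symm hdp]),
              card_triple hb1c hb1d hcd]
          have := Finset.card_le_card hsub
          rw [hc4, M.card3 K hK] at this
          omega
  obtain ⟨a2, b2, ha2b2, ha2L2, hb2L2, ha2, hb2, hnc1, hnc2⟩ := hlabel
  have ha2p : a2 ≠ p := fun h => hpL2 (h ▸ ha2L2)
  have hb2p : b2 ≠ p := fun h => hpL2 (h ▸ hb2L2)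
  have hqa2 : q ≠ a2 := fun h => hq2 (h ▸ ha2)
  have hqb2 : q ≠ b2 := fun h => hq2 (h ▸ hb2)
  have hL2eq : L2 = {q, a2, b2} :=
    eq_triple_of_card_three (M.card3 L2 hL2) hqL2 ha2L2 hb2L2 hqa2 hqb2 ha2b2
  have ha1X2 : a1 ∉ f 1 := fun h => ha1p (hX12 a1 ha1 h)
  have hb1X2 : b1 ∉ f 1 := fun h => hb1p (hX12 b1 hb1 h)
  have ha2X1 : a2 ∉ f 0 := fun h => ha2p (hX12 a2 h ha2)
  have hb2X1 : b2 ∉ f 0 := fun h => hb2p (hX12 b2 h hb2)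
  have ha1a2 : a1 ≠ a2 := fun h => ha2X1 (h ▸ ha1)
  have ha1b2 : a1 ≠ b2 := fun h => hb2X1 (h ▸ ha1)
  have hb1a2 : b1 ≠ a2 := fun h => ha2X1 (h ▸ hb1)
  have hb1b2 : b1 ≠ b2 := fun h => hb2X1 (h ▸ hb1)
  have hL1L2 : L1 ≠ L2 := by
    intro h
    have : a1 ∈ L2 := by rw [← h, hL1eq]; simp
    rw [hL2eq] at this
    exact notMem_triple this (Ne.symm hqa1) ha1a2 ha1b2
  have hnocross1 : ∀ L ∈ M.lines, a1 ∈ L → b2 ∈ L → False := by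
    intro L hL h1 h2
    exact hnc1 ⟨L, hL,
      cross_line M hrank hfree1 hfree2 hc1 hc2 hp12 ha1 hb2 hb2p hL h1 h2, h1, h2⟩
  have hnocross2 : ∀ L ∈ M.lines, b1 ∈ L → a2 ∈ L → False := by
    intro L hL h1 h2
    exact hnc2 ⟨L, hL,
      cross_line M hrank hfree1 hfree2 hc1 hc2 hp12 hb1 ha2 ha2p hL h1 h2, h1, h2⟩
  -- the switched line set
  set rest := (M.lines.erase L1).erase L2 with hrestdef
  have hrest_sub : rest ⊆ M.lines := fun L hL =>
    Finset.mem_of_mem_erase (Finset.mem_of_mem_erase hL)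
  have hmemIff : ∀ L : Finset S,
      L ∈ insert ({q, a1, b2} : Finset S) (insert ({q, b1, a2} : Finset S) rest) ↔
      (L = {q, a1, b2} ∨ L = {q, b1, a2} ∨ (L ∈ M.lines ∧ L ≠ L1 ∧ L ≠ L2)) := by
    intro L
    simp only [Finset.mem_insert, Finset.mem_erase, hrestdef]
    tauto
  have hN1notM : ({q, a1, b2} : Finset S) ∉ M.lines := fun h =>
    hnocross1 _ h (by simp) (by simp)
  have hN2notM : ({q, b1, a2} : Finset S) ∉ M.lines := fun h =>
    hnocross2 _ h (by simp) (by simp)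
  have hN1N2 : ({q, a1, b2} : Finset S) ≠ ({q, b1, a2} : Finset S) := by
    intro h
    have : a1 ∈ ({q, b1, a2} : Finset S) := h ▸ (by simp : a1 ∈ ({q, a1, b2} : Finset S))
    exact notMem_triple this (Ne.symm hqa1) ha1b1 ha1a2
  have hN2rest : ({q, b1, a2} : Finset S) ∉ rest := fun h => hN2notM (hrest_sub h)
  have hN1ins : ({q, a1, b2} : Finset S) ∉ insert ({q, b1, a2} : Finset S) rest := by
    intro h
    rcases Finset.mem_insert.mp h with h | h
    · exact hN1N2 h
    · exact hN1notM (hrest_sub h)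
  have hL2e1 : L2 ∈ M.lines.erase L1 := Finset.mem_erase.mpr ⟨Ne.symm hL1L2, hL2⟩
  have hL1rest : L1 ∉ insert L2 rest := by
    intro h
    rcases Finset.mem_insert.mp h with h | h
    · exact hL1L2 h
    · exact Finset.notMem_erase L1 M.lines (Finset.mem_of_mem_erase h)
  have hL2rest : L2 ∉ rest := Finset.notMem_erase L2 _
  have hMsplit : M.lines = insert L1 (insert L2 rest) := by
    rw [hrestdef, Finset.insert_erase hL2e1, Finset.insert_erase hL1]
  -- PSTS structure on the switched lines
  have hpairN1 : ∀ L ∈ M.lines, L ≠ L1 → L ≠ L2 → ∀ a b : S, a ≠ b →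
      a ∈ ({q, a1, b2} : Finset S) → b ∈ ({q, a1, b2} : Finset S) →
      a ∈ L → b ∈ L → False := by
    intro L hL hne1 hne2 a b hab haN hbN haL hbL
    rcases mem_triple.mp haN with rfl | rfl | rfl <;>
      rcases mem_triple.mp hbN with rfl | rfl | rfl
    · exact hab rfl
    · exact hne1 (uniq_pair M hL hL1 hab haL hbL (by rw [hL1eq]; simp) (by rw [hL1eq]; simp))
    · exact hne2 (uniq_pair M hL hL2 hab haL hbL (by rw [hL2eq]; simp) (by rw [hL2eq]; simp))
    · exact hne1 (uniq_pair M hL hL1 hab haL hbL (by rw [hL1eq]; simp) (by rw [hL1eq]; simp))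
    · exact hab rfl
    · exact hnocross1 L hL haL hbL
    · exact hne2 (uniq_pair M hL hL2 hab haL hbL (by rw [hL2eq]; simp) (by rw [hL2eq]; simp))
    · exact hnocross1 L hL hbL haL
    · exact hab rfl
  have hpairN2 : ∀ L ∈ M.lines, L ≠ L1 → L ≠ L2 → ∀ a b : S, a ≠ b →
      a ∈ ({q, b1, a2} : Finset S) → b ∈ ({q, b1, a2} : Finset S) →
      a ∈ L → b ∈ L → False := by
    intro L hL hne1 hne2 a b hab haN hbN haL hbL
    rcases mem_triple.mp haN with rfl | rfl | rfl <;>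
      rcases mem_triple.mp hbN with rfl | rfl | rfl
    · exact hab rfl
    · exact hne1 (uniq_pair M hL hL1 hab haL hbL (by rw [hL1eq]; simp) (by rw [hL1eq]; simp))
    · exact hne2 (uniq_pair M hL hL2 hab haL hbL (by rw [hL2eq]; simp) (by rw [hL2eq]; simp))
    · exact hne1 (uniq_pair M hL hL1 hab haL hbL (by rw [hL1eq]; simp) (by rw [hL1eq]; simp))
    · exact hab rfl
    · exact hnocross2 L hL haL hbL
    · exact hne2 (uniq_pair M hL hL2 hab haL hbL (by rw [hL2eq]; simp) (by rw [hL2eq]; simp))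
    · exact hnocross2 L hL hbL haL
    · exact hab rfl
  have hNNinter : ∀ x : S, x ∈ ({q, a1, b2} : Finset S) → x ∈ ({q, b1, a2} : Finset S) →
      x = q := by
    intro x h1 h2
    rcases mem_triple.mp h1 with rfl | rfl | rfl
    · rfl
    · exact absurd (notMem_triple h2 (Ne.symm hqa1) ha1b1 ha1a2) not_false
    · exact absurd (notMem_triple h2 (Ne.symm hqb2) (Ne.symm hb1b2) (Ne.symm ha2b2)) not_false
  have hcard3' : ∀ L ∈ insert ({q, a1, b2} : Finset S) (insert ({q, b1, a2} : Finset S) rest),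
      L.card = 3 := by
    intro L hL
    rcases (hmemIff L).mp hL with rfl | rfl | ⟨hLM, _, _⟩
    · exact card_triple hqa1 hqb2 ha1b2
    · exact card_triple hqb1 hqa2 hb1a2
    · exact M.card3 L hLM
  have hunique' : ∀ La ∈ insert ({q, a1, b2} : Finset S) (insert ({q, b1, a2} : Finset S) rest),
      ∀ Lb ∈ insert ({q, a1, b2} : Finset S) (insert ({q, b1, a2} : Finset S) rest),
      ∀ a b : S, a ≠ b → a ∈ La → b ∈ La → a ∈ Lb → b ∈ Lb → La = Lb := by
    intro La hLa Lb hLb a b hab h1 h2 h3 h4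
    rcases (hmemIff La).mp hLa with rfl | rfl | ⟨hLaM, hna1, hna2⟩ <;>
      rcases (hmemIff Lb).mp hLb with rfl | rfl | ⟨hLbM, hnb1, hnb2⟩
    · rfl
    · exact absurd ((hNNinter a h1 h3).trans (hNNinter b h2 h4).symm) hab
    · exact (hpairN1 Lb hLbM hnb1 hnb2 a b hab h1 h2 h3 h4).elim
    · exact absurd ((hNNinter a h3 h1).trans (hNNinter b h4 h2).symm) hab
    · rfl
    · exact (hpairN2 Lb hLbM hnb1 hnb2 a b hab h1 h2 h3 h4).elim
    · exact (hpairN1 La hLaM hna1 hna2 a b hab h3 h4 h1 h2).elim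
    · exact (hpairN2 La hLaM hna1 hna2 a b hab h3 h4 h1 h2).elim
    · exact M.unique La hLaM Lb hLbM a b hab h1 h2 h3 h4
  -- line count
  have h2le : 2 ≤ M.lines.card := Finset.one_lt_card.mpr ⟨L1, hL1, L2, hL2, hL1L2⟩
  have hcardlines :
      (insert ({q, a1, b2} : Finset S) (insert ({q, b1, a2} : Finset S) rest)).card
        = (n + 1).choose 3 := by
    rw [Finset.card_insert_of_notMem hN1ins, Finset.card_insert_of_notMem hN2rest,
      hrestdef, Finset.card_erase_of_mem hL2e1, Finset.card_erase_of_mem hL1]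
    rw [hclines] at h2le ⊢
    omega
  -- point ranks
  have hindicator : ∀ x : S,
      (if x ∈ L1 then 1 else 0) + (if x ∈ L2 then 1 else 0)
        = (if x ∈ ({q, a1, b2} : Finset S) then 1 else 0)
          + (if x ∈ ({q, b1, a2} : Finset S) then 1 else 0) := by
    intro x
    rw [hL1eq, hL2eq]
    by_cases h1 : x = q
    · subst h1; simp
    by_cases h2 : x = a1
    · subst h2
      simp [Ne.symm hqa1, ha1b1, ha1a2, ha1b2]
    by_cases h3 : x = b1
    · subst h3
      simp [Ne.symm hqb1, Ne.symm ha1b1, hb1a2, hb1b2]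
    by_cases h4 : x = a2
    · subst h4
      simp [Ne.symm hqa2, Ne.symm ha1a2, Ne.symm hb1a2, ha2b2]
    by_cases h5 : x = b2
    · subst h5
      simp [Ne.symm hqb2, Ne.symm ha1b2, Ne.symm hb1b2, Ne.symm ha2b2]
    · simp [h1, h2, h3, h4, h5]
  have hrankIns : ∀ x : S,
      ((insert ({q, a1, b2} : Finset S) (insert ({q, b1, a2} : Finset S) rest)).filter
        (fun K => x ∈ K)).card = n - 1 := by
    intro x
    have e1 := card_filter_insert hN1ins x
    have e2 := card_filter_insert hN2rest x
    have e3 := card_filter_insert hL1rest x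
    have e4 := card_filter_insert hL2rest x
    have hr : (M.lines.filter (fun K => x ∈ K)).card = n - 1 := hrank x
    rw [hMsplit, e3, e4] at hr
    have hind := hindicator x
    rw [e1, e2]
    omega
  -- no freely contained K_n in the switched configuration
  have nofree : ∀ Mp : PSTS S,
      (∀ L : Finset S, L ∈ Mp.lines ↔
        (L = {q, a1, b2} ∨ L = {q, b1, a2} ∨ (L ∈ M.lines ∧ L ≠ L1 ∧ L ≠ L2))) →
      (∀ x : S, pointRank Mp x = n - 1) →
      ∀ X : Finset S, X.card = n → FreelyContains Mp X → False := by
    intro Mp hmemp hrankp X hXcard hXfr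
    have hL1eq' : L1 = {q, b1, a1} := by
      rw [hL1eq]; ext v; simp; tauto
    have hL2eq' : L2 = {q, b2, a2} := by
      rw [hL2eq]; ext v; simp; tauto
    have orswap : ∀ {P Q R : Prop}, (P ∨ Q ∨ R) ↔ (Q ∨ P ∨ R) := by tauto
    have hmemp' : ∀ L : Finset S, L ∈ Mp.lines ↔
        (L = {q, b1, a2} ∨ L = {q, a1, b2} ∨ (L ∈ M.lines ∧ L ≠ L1 ∧ L ≠ L2)) :=
      fun L => (hmemp L).trans orswap
    have hedge1 : ¬(a1 ∈ X ∧ b1 ∈ X) := by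
      rintro ⟨hh1, hh2⟩
      obtain ⟨L, hLm, haL, hbL, _⟩ := free1 hXfr a1 hh1 b1 hh2 ha1b1
      rcases (hmemp L).mp hLm with rfl | rfl | ⟨hLM, hne1, _⟩
      · exact notMem_triple hbL (Ne.symm hqb1) (Ne.symm ha1b1) hb1b2
      · exact notMem_triple haL (Ne.symm hqa1) ha1b1 ha1a2
      · exact hne1 (uniq_pair M hLM hL1 ha1b1 haL hbL (by rw [hL1eq]; simp) (by rw [hL1eq]; simp))
    have hedge2 : ¬(a2 ∈ X ∧ b2 ∈ X) := by
      rintro ⟨hh1, hh2⟩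
      obtain ⟨L, hLm, haL, hbL, _⟩ := free1 hXfr a2 hh1 b2 hh2 ha2b2
      rcases (hmemp L).mp hLm with rfl | rfl | ⟨hLM, _, hne2⟩
      · exact notMem_triple haL (Ne.symm hqa2) (Ne.symm ha1a2) ha2b2
      · exact notMem_triple hbL (Ne.symm hqb2) (Ne.symm hb1b2) (Ne.symm ha2b2)
      · exact hne2 (uniq_pair M hLM hL2 ha2b2 haL hbL (by rw [hL2eq]; simp) (by rw [hL2eq]; simp))
    by_cases hqX : q ∈ X
    · have hN1m : ({q, a1, b2} : Finset S) ∈ Mp.lines := (hmemp _).mpr (Or.inl rfl)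
      have hN2m : ({q, b1, a2} : Finset S) ∈ Mp.lines := (hmemp _).mpr (Or.inr (Or.inl rfl))
      have hN1c : (({q, a1, b2} : Finset S) ∩ X).card = 2 :=
        free_line_inter Mp hrankp hXfr hXcard hqX hN1m (by simp)
      have hN2c : (({q, b1, a2} : Finset S) ∩ X).card = 2 :=
        free_line_inter Mp hrankp hXfr hXcard hqX hN2m (by simp)
      have hor1 : a1 ∈ X ∨ b2 ∈ X := by
        by_contra hcon
        push_neg at hcon
        have hsub : ({q, a1, b2} : Finset S) ∩ X ⊆ {q} := by
          intro v hv
          obtain ⟨hvN, hvX⟩ := Finset.mem_inter.mp hv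
          rcases mem_triple.mp hvN with rfl | rfl | rfl
          · simp
          · exact absurd hvX hcon.1
          · exact absurd hvX hcon.2
        have := Finset.card_le_card hsub
        rw [hN1c] at this
        simp at this
      have hor2 : b1 ∈ X ∨ a2 ∈ X := by
        by_contra hcon
        push_neg at hcon
        have hsub : ({q, b1, a2} : Finset S) ∩ X ⊆ {q} := by
          intro v hv
          obtain ⟨hvN, hvX⟩ := Finset.mem_inter.mp hv
          rcases mem_triple.mp hvN with rfl | rfl | rfl
          · simp
          · exact absurd hvX hcon.1
          · exact absurd hvX hcon.2
        have := Finset.card_le_card hsub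
        rw [hN2c] at this
        simp at this
      rcases hor1 with hh1 | hh1 <;> rcases hor2 with hh2 | hh2
      · exact hedge1 ⟨hh1, hh2⟩
      · exact caseB M Mp hrank hrankp hfree1 hfree2 hc1 hc2 hn hp12 hq1 hq2
          ha1 hb1 ha2 hb2 ha1p hb1p ha2p hb2p ha1b1 ha2b2 hL1 hL2 hL1eq hL2eq
          hexact hmemp hXfr hXcard hqX hh1 hh2
      · exact caseB M Mp hrank hrankp hfree1 hfree2 hc1 hc2 hn hp12 hq1 hq2
          hb1 ha1 hb2 ha2 hb1p ha1p hb2p ha2p (Ne.symm ha1b1) (Ne.symm ha2b2) hL1 hL2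
          hL1eq' hL2eq' hexact hmemp' hXfr hXcard hqX hh2 hh1
      · exact hedge2 ⟨hh2, hh1⟩
    · by_cases h11 : a1 ∈ X ∧ b1 ∈ X
      · exact hedge1 h11
      by_cases h22 : a2 ∈ X ∧ b2 ∈ X
      · exact hedge2 h22
      by_cases hA : a1 ∈ X ∧ b2 ∈ X
      · exact caseA M Mp hrank hrankp hfree1 hfree2 hc1 hc2 hn hp12 hq1 hq2
          ha1 hb1 ha2 hb2 ha1p hb1p ha2p hb2p ha1b1 ha2b2 hL1 hL2 hL1eq hL2eq
          hnc1 hmemp hXfr hXcard hqX hA.1 hA.2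
      by_cases hB : b1 ∈ X ∧ a2 ∈ X
      · exact caseA M Mp hrank hrankp hfree1 hfree2 hc1 hc2 hn hp12 hq1 hq2
          hb1 ha1 hb2 ha2 hb1p ha1p hb2p ha2p (Ne.symm ha1b1) (Ne.symm ha2b2) hL1 hL2
          hL1eq' hL2eq' hnc2 hmemp' hXfr hXcard hqX hB.1 hB.2
      -- X is freely contained in M, contradiction with exactness
      have hfreeM : FreelyContains M X := by
        apply mkFree
        · intro u huX v hvX huv
          obtain ⟨L, hLm, huL, hvL, hLc⟩ := free1 hXfr u huX v hvX huv
          rcases (hmemp L).mp hLm with rfl | rfl | ⟨hLM, _, _⟩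
          · exfalso
            rcases mem_triple.mp huL with rfl | rfl | rfl
            · exact hqX huX
            · rcases mem_triple.mp hvL with rfl | rfl | rfl
              · exact hqX hvX
              · exact huv rfl
              · exact hA ⟨huX, hvX⟩
            · rcases mem_triple.mp hvL with rfl | rfl | rfl
              · exact hqX hvX
              · exact hA ⟨hvX, huX⟩
              · exact huv rfl
          · exfalso
            rcases mem_triple.mp huL with rfl | rfl | rfl
            · exact hqX huX
            · rcases mem_triple.mp hvL with rfl | rfl | rfl
              · exact hqX hvX
              · exact huv rfl
              · exact hB ⟨huX, hvX⟩
            · rcases mem_triple.mp hvL with rfl | rfl | rfl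
              · exact hqX hvX
              · exact hB ⟨hvX, huX⟩
              · exact huv rfl
          · exact ⟨L, hLM, huL, hvL, hLc⟩
        · intro Sx Sy hSxm hSxc hSym hSyc hne' r hrx hry
          have hnotL1 : ∀ K : Finset S, (K ∩ X).card = 2 → K ≠ L1 := by
            intro K hKc hKe
            rw [hKe] at hKc
            have hsub : L1 ∩ X ⊆ {a1, b1} := by
              intro v hv
              obtain ⟨hvL, hvX⟩ := Finset.mem_inter.mp hv
              rcases mem_triple.mp (hL1eq ▸ hvL) with rfl | rfl | rfl
              · exact absurd hvX hqX
              · simp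
              · simp
            have heq2 : L1 ∩ X = {a1, b1} :=
              Finset.eq_of_subset_of_card_le hsub (by rw [Finset.card_pair ha1b1, hKc])
            have hha : a1 ∈ L1 ∩ X := by rw [heq2]; simp
            have hhb : b1 ∈ L1 ∩ X := by rw [heq2]; simp
            exact h11 ⟨(Finset.mem_inter.mp hha).2, (Finset.mem_inter.mp hhb).2⟩
          have hnotL2 : ∀ K : Finset S, (K ∩ X).card = 2 → K ≠ L2 := by
            intro K hKc hKe
            rw [hKe] at hKc
            have hsub : L2 ∩ X ⊆ {a2, b2} := by
              intro v hv
              obtain ⟨hvL, hvX⟩ := Finset.mem_inter.mp hv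
              rcases mem_triple.mp (hL2eq ▸ hvL) with rfl | rfl | rfl
              · exact absurd hvX hqX
              · simp
              · simp
            have heq2 : L2 ∩ X = {a2, b2} :=
              Finset.eq_of_subset_of_card_le hsub (by rw [Finset.card_pair ha2b2, hKc])
            have hha : a2 ∈ L2 ∩ X := by rw [heq2]; simp
            have hhb : b2 ∈ L2 ∩ X := by rw [heq2]; simp
            exact h22 ⟨(Finset.mem_inter.mp hha).2, (Finset.mem_inter.mp hhb).2⟩
          exact free2 hXfr Sx Sy
            ((hmemp Sx).mpr (Or.inr (Or.inr ⟨hSxm, hnotL1 Sx hSxc, hnotL2 Sx hSxc⟩))) hSxc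
            ((hmemp Sy).mpr (Or.inr (Or.inr ⟨hSym, hnotL1 Sy hSyc, hnotL2 Sy hSyc⟩))) hSyc
            hne' r hrx hry
      rcases hexact X hXcard hfreeM with rfl | rfl
      · exact h11 ⟨ha1, hb1⟩
      · exact h22 ⟨ha2, hb2⟩
  -- assemble the new configuration
  refine ⟨⟨insert ({q, a1, b2} : Finset S) (insert ({q, b1, a2} : Finset S) rest),
    hcard3', hunique'⟩, ⟨hcS, hcardlines, ?_⟩, ?_⟩
  · intro x
    have := hrankIns x
    show ((insert ({q, a1, b2} : Finset S) (insert ({q, b1, a2} : Finset S) rest)).filter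
      (fun L => x ∈ L)).card = (n + 1) - 2
    omega
  · refine ⟨fun i => i.elim0, fun {i j} _ => i.elim0, fun i => i.elim0, ?_⟩
    intro X hXc hXfr
    exact (nofree ⟨insert ({q, a1, b2} : Finset S) (insert ({q, b1, a2} : Finset S) rest),
      hcard3', hunique'⟩ (fun L => hmemIff L) (fun x => hrankIns x) X hXc hXfr).elim

end Main

/-- If there is a B(n+1)-configuration freely containing exactly
two K_n-graphs (n ≥ 4), then there is a B(n+1)-configuration freely containing
no K_n-graph at all. -/
theorem stmt_17 (n : ℕ) (hn : 4 ≤ n)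
    (h : ∃ M : PSTS (Fin (Nat.choose (n + 1) 2)), IsBinomial M (n + 1) ∧
      ExactlyKGraphs M n 2) :
    ∃ M' : PSTS (Fin (Nat.choose (n + 1) 2)), IsBinomial M' (n + 1) ∧
      ExactlyKGraphs M' n 0 := by
  obtain ⟨M, h1, h2⟩ := h
  exact switch_main hn M h1 h2
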